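/- arXiv:1507.05015 — 2 statements merged into one kernel-verified Lean document; each statement's English description precedes it below -/
import Mathlib

section
/- Let η be a countable ordinal and C a nonempty clopen subset of 2^ω. Then ℕ^η_0 ∩ C² is not separable from ℕ^η_1 ∩ C² by a pot(D_η(Σ^0_1)) set. -/
open Set Function

abbrev Cantor : Type := ℕ → Bool
abbrev Baire : Type := ℕ → ℕ

abbrev SetClass : Type 1 := (Z : Type) → TopologicalSpace Z → Set Z → Prop

/-- `S` is a Borel subset of `Z`. -/
def IsBorel {Z : Type} [TopologicalSpace Z] (S : Set Z) : Prop :=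
  @MeasurableSet Z (borel Z) S

/-- the inverse `A⁻¹` of a relation. -/
def relInv {X : Type} (A : Set (X × X)) : Set (X × X) := {p | (p.2, p.1) ∈ A}

/-- the symmetrization `s(A) = A ∪ A⁻¹` of a relation. -/
def symmRel {X : Type} (A : Set (X × X)) : Set (X × X) := A ∪ relInv A

def IsIrreflRel {X : Type} (A : Set (X × X)) : Prop := ∀ x : X, (x, x) ∉ A

def IsAntisymmRel {X : Type} (A : Set (X × X)) : Prop :=
  ∀ x y : X, (x, y) ∈ A → (y, x) ∈ A → x = y

/-- an oriented graph is an irreflexive antisymmetric relation. -/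
def IsOrientedGraph {X : Type} (A : Set (X × X)) : Prop := IsIrreflRel A ∧ IsAntisymmRel A

/-- a relation is acyclic if there is no injective sequence `(x_i)_{i ≤ n}` with `n ≥ 2`,
`(x_i, x_{i+1}) ∈ A` for `i < n` and `(x_n, x_0) ∈ A`. -/
def AcyclicRel {X : Type} (A : Set (X × X)) : Prop :=
  ¬ ∃ (n : ℕ) (x : ℕ → X), 2 ≤ n ∧ (∀ i j, i ≤ n → j ≤ n → x i = x j → i = j) ∧
      (∀ i, i < n → (x i, x (i + 1)) ∈ A) ∧ (x n, x 0) ∈ A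

/-- `A` is s-acyclic if `s(A)` is acyclic. -/
def SAcyclic {X : Type} (A : Set (X × X)) : Prop := AcyclicRel (symmRel A)

/-- a set is locally countable if all of its vertical and horizontal sections are countable. -/
def LocallyCountable {X Y : Type} (A : Set (X × Y)) : Prop :=
  (∀ x : X, {y : Y | (x, y) ∈ A}.Countable) ∧ (∀ y : Y, {x : X | (x, y) ∈ A}.Countable)

/-- a space is zero-dimensional if it has a neighborhood basis of clopen sets. -/
def ZeroDimensional (Z : Type) [TopologicalSpace Z] : Prop :=
  ∀ x : Z, ∀ U ∈ nhds x, ∃ V : Set Z, IsClopen V ∧ x ∈ V ∧ V ⊆ U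

/-- `B ⊆ X × Y` is potentially in the class `Γ`: there are finer Polish topologies on `X` and
on `Y` for which `B` belongs to `Γ` computed in the corresponding product space. -/
def Potentially (Γ : SetClass) {X Y : Type} [tX : TopologicalSpace X] [tY : TopologicalSpace Y]
    (B : Set (X × Y)) : Prop :=
  ∃ (σ : TopologicalSpace X) (τ : TopologicalSpace Y),
    σ ≤ tX ∧ τ ≤ tY ∧ @PolishSpace X σ ∧ @PolishSpace Y τ ∧
      Γ (X × Y) (@instTopologicalSpaceProd X Y σ τ) B

/-- `A` is separable from `B` by a `pot(Γ)` set. -/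
def SepPot (Γ : SetClass) {X Y : Type} [TopologicalSpace X] [TopologicalSpace Y]
    (A B : Set (X × Y)) : Prop :=
  ∃ S : Set (X × Y), Potentially Γ S ∧ A ⊆ S ∧ Disjoint S B

def openClass : SetClass := fun Z t S => @IsOpen Z t S

def closedClass : SetClass := fun Z t S => @IsClosed Z t S

/-- the class `Σ^0_2` of countable unions of closed sets. -/
def sigma02Class : SetClass := fun Z t S =>
  ∃ F : ℕ → Set Z, (∀ n, @IsClosed Z t (F n)) ∧ S = ⋃ n, F n

/-- the class `Π^0_2` of countable intersections of open sets. -/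
def pi02Class : SetClass := fun Z t S =>
  ∃ U : ℕ → Set Z, (∀ n, @IsOpen Z t (U n)) ∧ S = ⋂ n, U n

/-- the class `Δ^0_2 = Σ^0_2 ∩ Π^0_2`. -/
def delta02Class : SetClass := fun Z t S => sigma02Class Z t S ∧ pi02Class Z t S

/-- the dual class `Ď` of complements of sets in `Γ`. -/
def dualClass (Γ : SetClass) : SetClass := fun Z t S => Γ Z t Sᶜ

def interClass (Γ Γ' : SetClass) : SetClass := fun Z t S => Γ Z t S ∧ Γ' Z t S

/-- standard parity of an ordinal: the parity of its finite part. -/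
def OrdEven (o : Ordinal.{0}) : Prop := Even (o % Ordinal.omega0)

/-- the difference set `D((O_θ)_{θ<η})`. -/
def DiffSet {Z : Type} (η : Ordinal.{0}) (O : Ordinal.{0} → Set Z) : Set Z :=
  {x | ∃ θ, θ < η ∧ (OrdEven θ ↔ ¬ OrdEven η) ∧ x ∈ O θ ∧ ∀ θ', θ' < θ → x ∉ O θ'}

/-- the class `D_η(Γ)` of `η`-differences of increasing sequences of sets in `Γ`. -/
def DClass (η : Ordinal.{0}) (Γ : SetClass) : SetClass := fun Z t S =>
  ∃ O : Ordinal.{0} → Set Z, (∀ θ, θ < η → Γ Z t (O θ)) ∧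
    (∀ θ₁ θ₂, θ₁ ≤ θ₂ → θ₂ < η → O θ₁ ⊆ O θ₂) ∧ S = DiffSet η O

/-- choice between a relation and its inverse. -/
def cSel {X : Type} (b : Bool) (C : Set (X × X)) : Set (X × X) :=
  if b then C else relInv C

/-- quasi-acyclicity of a relation on a Polish space. -/
def QuasiAcyclic {X : Type} [TopologicalSpace X] (A : Set (X × X)) : Prop :=
  ∃ C : ℕ → Set (X × X),
    (∀ n, Potentially closedClass (C n)) ∧
    (∀ m n, m ≠ n → Disjoint (C m) (C n)) ∧
    (⋃ n, C n) = A ∧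
    ∀ z₀ z₁ z₂ : X, (z₀, z₁) ∈ symmRel A → (z₁, z₂) ∈ symmRel A → z₀ ≠ z₂ →
      ∀ (k : ℕ) (nn : ℕ → ℕ) (ε : ℕ → Bool) (x y : ℕ → X), 1 ≤ k →
        (∀ i, 1 ≤ i → i ≤ k →
          x i ≠ z₀ ∧ x i ≠ z₁ ∧ x i ≠ z₂ ∧ y i ≠ z₀ ∧ y i ≠ z₁ ∧ y i ≠ z₂) →
        (z₀, x 1) ∈ cSel (ε 1) (C (nn 1)) →
        (z₂, y 1) ∈ cSel (ε 1) (C (nn 1)) →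
        (∀ i, 2 ≤ i → i ≤ k →
          (x (i - 1), x i) ∈ cSel (ε i) (C (nn i)) ∧
          (y (i - 1), y i) ∈ cSel (ε i) (C (nn i))) →
        x k ≠ y k

/-- `(X, Y, A, B) ⊑ (X', Y', A', B')` : reduction by a pair of injective continuous maps. -/
def Reducible {X Y X' Y' : Type} [TopologicalSpace X] [TopologicalSpace Y]
    [TopologicalSpace X'] [TopologicalSpace Y']
    (A B : Set (X × Y)) (A' B' : Set (X' × Y')) : Prop :=
  ∃ (f : X → X') (g : Y → Y'), Continuous f ∧ Continuous g ∧
    Function.Injective f ∧ Function.Injective g ∧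
    (∀ p ∈ A, (f p.1, g p.2) ∈ A') ∧ (∀ p ∈ B, (f p.1, g p.2) ∈ B')

/-- reduction via a square map `f × f`. -/
def SqReducible {X X' : Type} [TopologicalSpace X] [TopologicalSpace X']
    (A B : Set (X × X)) (A' B' : Set (X' × X')) : Prop :=
  ∃ f : X → X', Continuous f ∧ Function.Injective f ∧
    (∀ p ∈ A, (f p.1, f p.2) ∈ A') ∧ (∀ p ∈ B, (f p.1, f p.2) ∈ B')

/-- a set is `K_σ` if it is a countable union of compact sets. -/
def IsKSigma {Z : Type} [TopologicalSpace Z] (S : Set Z) : Prop :=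
  ∃ K : ℕ → Set Z, (∀ n, IsCompact (K n)) ∧ S = ⋃ n, K n

/-- Wadge classes of Borel sets. -/
def IsWadgeClassOfBorel (Γ : SetClass) : Prop :=
  ∃ A : Set Baire, IsBorel A ∧
    ∀ (Z : Type) [tZ : TopologicalSpace Z], PolishSpace Z → ZeroDimensional Z →
      ∀ S : Set Z, (Γ Z tZ S ↔ ∃ f : Z → Baire, Continuous f ∧ S = f ⁻¹' A)

/-- the Borel classes `Σ^0_ξ`, `ξ ≥ 1`. -/
inductive IsSigma0 : Ordinal.{0} → (Z : Type) → TopologicalSpace Z → Set Z → Prop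
  | base (Z : Type) (t : TopologicalSpace Z) (S : Set Z) :
      @IsOpen Z t S → IsSigma0 1 Z t S
  | iUnion (Z : Type) (t : TopologicalSpace Z) (ξ : Ordinal.{0}) (o : ℕ → Ordinal.{0})
      (f : ℕ → Set Z) : 1 < ξ → (∀ n, (1 : Ordinal.{0}) ≤ o n) → (∀ n, o n < ξ) →
      (∀ n, IsSigma0 (o n) Z t (f n)ᶜ) → IsSigma0 ξ Z t (⋃ n, f n)

/-- the family of classes `D_η(Σ^0_1)`, `Ď_η(Σ^0_1)` (`1 ≤ η < ω₁`), `D_n(Σ^0_2)`,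
`Ď_n(Σ^0_2)` (`1 ≤ n < ω`) and `Δ^0_2`. -/
def GammaFamily (Γ : SetClass) : Prop :=
  (∃ η : Ordinal.{0}, 1 ≤ η ∧ η.card ≤ Cardinal.aleph0 ∧ Γ = DClass η openClass) ∨
  (∃ η : Ordinal.{0}, 1 ≤ η ∧ η.card ≤ Cardinal.aleph0 ∧ Γ = dualClass (DClass η openClass)) ∨
  (∃ n : ℕ, 1 ≤ n ∧ Γ = DClass (n : Ordinal.{0}) sigma02Class) ∨
  (∃ n : ℕ, 1 ≤ n ∧ Γ = dualClass (DClass (n : Ordinal.{0}) sigma02Class)) ∨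
  Γ = delta02Class

/-- specification of the map `φ_η : ω^{<ω} → {-1} ∪ (η+1)`, where `none` codes `-1`. -/
def PhiSpec (η : Ordinal.{0}) (φ : List ℕ → Option Ordinal.{0}) : Prop :=
  φ [] = some η ∧
  (∀ s o, φ s = some o → o ≤ η) ∧
  (∀ s n, φ s = none → φ (s ++ [n]) = none) ∧
  (∀ s n, φ s = some 0 → φ (s ++ [n]) = none) ∧
  (∀ s θ n, φ s = some (θ + 1) → φ (s ++ [n]) = some θ) ∧
  (∀ s o, φ s = some o → Order.IsSuccLimit o →
    ∃ θf : ℕ → Ordinal.{0}, (∀ n, φ (s ++ [n]) = some (θf n)) ∧ StrictMono θf ∧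
      (∀ n, ¬ OrdEven (θf n)) ∧ ∀ β, β < o → ∃ n, β ≤ θf n)

/-- the prime coding `I(s) = p_0^{s(0)+1} ⋯ p_{|s|-1}^{s(|s|-1)+1}`, `I(∅) = 0`. -/
noncomputable def Ifun (s : List ℕ) : ℕ :=
  if s = [] then 0
  else ∏ i ∈ Finset.range s.length, (Nat.nth Nat.Prime i) ^ (s.getD i 0 + 1)

/-- the bijection `⟨·⟩_η : T_η → ω`, increasing with respect to `I`. -/
noncomputable def cEnum (φ : List ℕ → Option Ordinal.{0}) (s : List ℕ) : ℕ :=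
  Nat.card {t : List ℕ // φ t ≠ none ∧ Ifun t < Ifun s}

/-- the length-lexicographic enumeration `∅, 0, 1, 00, 01, 10, 11, …` of `2^{<ω}`. -/
def lexEnum (n : ℕ) : List Bool := ((n + 1).bits).dropLast.reverse

/-- the map `ψ` enumerating `∅, ∅, 0, 0, 1, 1, 00, 00, 01, 01, …`. -/
def psiFun (q : ℕ) : List Bool := lexEnum (q / 2)

noncomputable def tAux (φ : List ℕ → Option Ordinal.{0}) (ε : Bool) : List ℕ → List Bool
  | [] => []
  | q :: r =>
      tAux φ ε r ++ psiFun q ++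
        List.replicate
          (cEnum φ (r.reverse ++ [q]) - cEnum φ r.reverse - (psiFun q).length - 1) false ++
        [ε]

/-- the sequences `t^ε_s` for `s ∈ T_η`. -/
noncomputable def tSeq (φ : List ℕ → Option Ordinal.{0}) (ε : Bool) (s : List ℕ) : List Bool :=
  tAux φ ε s.reverse

/-- the concatenation `u ⌢ γ ∈ 2^ω` of a finite sequence with an infinite one. -/
def appendSeq (u : List Bool) (γ : Cantor) : Cantor :=
  fun n => if n < u.length then u.getD n false else γ (n - u.length)

/-- the sets `ℕ^η_ε = {(t^0_s ⌢ γ, t^1_s ⌢ γ) | s ∈ T_η, parity(|s|) = ε}`,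
where `ε = false` codes `0` and `ε = true` codes `1`. -/
noncomputable def NNset (φ : List ℕ → Option Ordinal.{0}) (ε : Bool) : Set (Cantor × Cantor) :=
  {p | ∃ (s : List ℕ) (γ : Cantor), φ s ≠ none ∧ (Even s.length ↔ ε = false) ∧
      p.1 = appendSeq (tSeq φ false s) γ ∧ p.2 = appendSeq (tSeq φ true s) γ}

/-- the sets `𝕊^η_ε = {(t^0_s ⌢ γ, t^1_s ⌢ γ) | s ∈ T_η \ {∅},
parity(|s|) = 1 - |parity(s(0)) - ε|}`. -/
noncomputable def SSset (φ : List ℕ → Option Ordinal.{0}) (ε : Bool) : Set (Cantor × Cantor) :=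
  {p | ∃ (s : List ℕ) (γ : Cantor), φ s ≠ none ∧ s ≠ [] ∧
      ((¬ Even s.length) ↔ (Even (s.headD 0) ↔ ε = false)) ∧
      p.1 = appendSeq (tSeq φ false s) γ ∧ p.2 = appendSeq (tSeq φ true s) γ}

/-- prepending a digit to an element of the Cantor space. -/
def consSeq (b : Bool) (α : Cantor) : Cantor := fun n => if n = 0 then b else α (n - 1)

/-- the relation `{(0⌢α, 1⌢β) | (α, β) ∈ A}`. -/
def prep01 (A : Set (Cantor × Cantor)) : Set (Cantor × Cantor) :=
  {p | ∃ q ∈ A, p.1 = consSeq false q.1 ∧ p.2 = consSeq true q.2}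

/-- the sets `𝔹^η_ε = {(0⌢α, 1⌢β) | (α, β) ∈ ℕ^η_ε}`. -/
noncomputable def BBset (φ : List ℕ → Option Ordinal.{0}) (ε : Bool) : Set (Cantor × Cantor) :=
  prep01 (NNset φ ε)

/-- the sets `ℂ^η_ε = {(0⌢α, 1⌢β) | (α, β) ∈ 𝕊^η_ε}`. -/
noncomputable def CCset (φ : List ℕ → Option Ordinal.{0}) (ε : Bool) : Set (Cantor × Cantor) :=
  prep01 (SSset φ ε)

/-- the initial segment `α | l` of `α ∈ 2^ω`. -/
def listInit (α : Cantor) (l : ℕ) : List Bool := (List.range l).map α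

/-- frames, generating trees on `2 × 2`. -/
def IsFrame (F : ℕ → List Bool × List Bool) : Prop :=
  (∀ l : ℕ, (F l).1.length = l ∧ (F l).2.length = l) ∧
  (∀ p q : ℕ, ∀ w : List Bool, ∃ N : ℕ,
      (∃ l : ℕ, F l =
        ((F q).1 ++ false :: (w ++ List.replicate N false),
         (F q).2 ++ true :: (w ++ List.replicate N false))) ∧
      (((F q).1.length + 1 + w.length + N) - 1).unpair.1 = p) ∧
  (∀ l : ℕ, 0 < l → ∃ q : ℕ, q < l ∧ ∃ w : List Bool,
      (F l).1 = (F q).1 ++ false :: w ∧ (F l).2 = (F q).2 ++ true :: w)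

/-- the tree on `2 × 2` generated by a frame. -/
def frameTree (F : ℕ → List Bool × List Bool) : Set (List Bool × List Bool) :=
  {p | p.1.length = p.2.length ∧
      (p.1 = [] ∨ ∃ (q : ℕ) (w : List Bool),
        p.1 = (F q).1 ++ false :: w ∧ p.2 = (F q).2 ++ true :: w)}

/-- the body `⌈T⌉` of a tree on `2 × 2`. -/
def treeBody (T : Set (List Bool × List Bool)) : Set (Cantor × Cantor) :=
  {p | ∀ l : ℕ, (listInit p.1 l, listInit p.2 l) ∈ T}

/-- the equivalence relation `𝔼_0` of eventual agreement. -/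
def E0rel : Set (Cantor × Cantor) := {p | ∃ m : ℕ, ∀ n, m < n → p.1 n = p.2 n}

/-- the sets `𝔼^ε_0`. -/
def E0par (ε : ℕ) : Set (Cantor × Cantor) :=
  {p | ∃ m : ℕ, 0 < m ∧ p.1 m ≠ p.2 m ∧ (∀ n, m < n → p.1 n = p.2 n) ∧
      (m - 1).unpair.1 % 2 = ε}

/-- the shift map `S : 2^ω → 2^ω`. -/
def shiftSeq (α : Cantor) : Cantor := fun m => α (m + 1)

/-- the symmetric difference of two elements of `2^ω`. -/
def xorSeq (α β : Cantor) : Cantor := fun m => xor (α m) (β m)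

/-- the set `C_0` of eventually null sequences. -/
def Czero : Set Cantor := {α | ∃ m : ℕ, ∀ p, m ≤ p → α p = false}

/-- the sets `C_θ` built from a surjection `S` onto `η`. -/
def CTheta (S : ℕ → Ordinal.{0}) : Ordinal.{0} → Set Cantor := fun θ =>
  if θ = 0 then Czero
  else {α | ∃ m : ℕ, (∀ p : ℕ, α (Nat.pair m p) = false) ∧ S (Nat.unpair m).1 ≤ θ}

/-- the set `D_η = D((C_θ)_{θ<η})`. -/
def DEtaSet (η : Ordinal.{0}) (S : ℕ → Ordinal.{0}) : Set Cantor := DiffSet η (CTheta S)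

/-- the set `ℕ_n = {(α, β) ∈ ⌈T⌉ | S(α Δ β) ∉ D_n}`. -/
def NDn (F : ℕ → List Bool × List Bool) (n : ℕ) (Sn : ℕ → ℕ) : Set (Cantor × Cantor) :=
  {p | p ∈ treeBody (frameTree F) ∧
      shiftSeq (xorSeq p.1 p.2) ∉ DEtaSet (n : Ordinal.{0}) (fun m => (Sn m : Ordinal.{0}))}

namespace Aux6


def cyl (w : List Bool) : Set Cantor := {γ | ∀ i, i < w.length → γ i = w.getD i false}

def dropSeq (n : ℕ) (γ : Cantor) : Cantor := fun i => γ (n + i)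

lemma appendSeq_nil (γ : Cantor) : appendSeq [] γ = γ := by
  funext n; simp [appendSeq]

lemma appendSeq_append (u v : List Bool) (γ : Cantor) :
    appendSeq (u ++ v) γ = appendSeq u (appendSeq v γ) := by
  funext n
  simp only [appendSeq, List.length_append]
  rcases lt_or_ge n u.length with h | h
  · simp only [if_pos h, if_pos (lt_of_lt_of_le h (Nat.le_add_right _ _))]
    rw [List.getD_eq_getElem?_getD, List.getD_eq_getElem?_getD, List.getElem?_append_left h]
  · rcases lt_or_ge n (u.length + v.length) with h2 | h2
    · have h3 : n - u.length < v.length := by omega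
      simp only [if_pos h2, if_neg (not_lt.2 h), if_pos h3]
      rw [List.getD_append_right _ _ _ _ h]
    · have h3 : ¬ n - u.length < v.length := by omega
      simp only [if_neg (not_lt.2 h2), if_neg (not_lt.2 h), if_neg h3]
      congr 1; omega

lemma appendSeq_mem_cyl (w : List Bool) (γ : Cantor) : appendSeq w γ ∈ cyl w := by
  intro i hi; simp [appendSeq, hi]

lemma appendSeq_mem_cyl_of_prefix {v b : List Bool} (h : v <+: b) (γ : Cantor) :
    appendSeq b γ ∈ cyl v := by
  obtain ⟨t, rfl⟩ := h
  intro i hi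
  have := appendSeq_mem_cyl (v ++ t) γ i (by simp; omega)
  rw [this, List.getD_append _ _ _ _ hi]

lemma dropSeq_appendSeq (w : List Bool) (γ : Cantor) :
    dropSeq w.length (appendSeq w γ) = γ := by
  funext n; simp [dropSeq, appendSeq]

lemma appendSeq_dropSeq {w : List Bool} {γ : Cantor} (h : γ ∈ cyl w) :
    appendSeq w (dropSeq w.length γ) = γ := by
  funext n
  simp only [appendSeq, dropSeq]
  rcases lt_or_ge n w.length with h1 | h1
  · rw [if_pos h1, List.getD_eq_getElem?_getD, List.getElem?_eq_getElem h1]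
    have := h n h1
    rw [List.getD_eq_getElem?_getD, List.getElem?_eq_getElem h1] at this
    simp [this]
  · simp only [if_neg (not_lt.2 h1)]; congr 1; omega

lemma isOpen_cyl (w : List Bool) : IsOpen (cyl w) := by
  have : cyl w = ⋂ i ∈ Finset.range w.length, {γ : Cantor | γ i = w.getD i false} := by
    ext γ; simp [cyl]
  rw [this]
  refine isOpen_biInter_finset fun i _ => ?_
  show IsOpen ((fun γ : Cantor => γ i) ⁻¹' {w.getD i false})
  exact (isOpen_discrete _).preimage (continuous_apply i)

lemma isClosed_cyl (w : List Bool) : IsClosed (cyl w) := by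
  have : (cyl w)ᶜ = ⋃ i ∈ Finset.range w.length, {γ : Cantor | γ i = w.getD i false}ᶜ := by
    ext γ; simp [cyl]
  rw [← isOpen_compl_iff, this]
  refine isOpen_biUnion fun i _ => ?_
  show IsOpen ((fun γ : Cantor => γ i) ⁻¹' {w.getD i false})ᶜ
  exact ((isClosed_discrete _).preimage (continuous_apply i)).isOpen_compl

lemma continuous_appendSeq (w : List Bool) : Continuous (appendSeq w) := by
  refine continuous_pi fun n => ?_
  unfold appendSeq
  split
  · exact continuous_const
  · exact continuous_apply _

lemma continuous_dropSeq (n : ℕ) : Continuous (dropSeq n) :=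
  continuous_pi fun i => continuous_apply _

lemma image_appendSeq (w : List Bool) (U : Set Cantor) :
    appendSeq w '' U = cyl w ∩ dropSeq w.length ⁻¹' U := by
  ext γ
  constructor
  · rintro ⟨γ', hγ', rfl⟩
    exact ⟨appendSeq_mem_cyl w γ', by simpa [dropSeq_appendSeq]⟩
  · rintro ⟨h1, h2⟩
    exact ⟨dropSeq w.length γ, h2, appendSeq_dropSeq h1⟩

lemma isOpenMap_appendSeq (w : List Bool) : IsOpenMap (appendSeq w) := by
  intro U hU
  rw [image_appendSeq]
  exact (isOpen_cyl w).inter (hU.preimage (continuous_dropSeq _))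

lemma meagre_preimage_appendSeq {M : Set Cantor} (h : IsMeagre M) (w : List Bool) :
    IsMeagre (appendSeq w ⁻¹' M) :=
  h.preimage_of_isOpenMap (continuous_appendSeq w) (isOpenMap_appendSeq w)

lemma not_isMeagre_of_isOpen {U : Set Cantor} (hU : IsOpen U) (hne : U.Nonempty) :
    ¬ IsMeagre U := by
  intro h
  have hd : Dense Uᶜ := dense_of_mem_residual h
  obtain ⟨γ, hγ⟩ := hne
  obtain ⟨x, hx1, hx2⟩ := hd.exists_mem_open hU ⟨γ, hγ⟩
  exact hx1 hx2

lemma eq_empty_of_isOpen_isMeagre {U : Set Cantor} (hU : IsOpen U) (h : IsMeagre U) :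
    U = ∅ := by
  by_contra hne
  exact not_isMeagre_of_isOpen hU (nonempty_iff_ne_empty.2 hne) h

lemma not_isMeagre_cyl (w : List Bool) : ¬ IsMeagre (cyl w) :=
  not_isMeagre_of_isOpen (isOpen_cyl w) ⟨appendSeq w (fun _ => false), appendSeq_mem_cyl _ _⟩

lemma isMeagre_iUnion' {ι : Sort*} [Countable ι] {f : ι → Set Cantor}
    (h : ∀ i, IsMeagre (f i)) : IsMeagre (⋃ i, f i) := by
  rw [IsMeagre, compl_iUnion]
  exact countable_iInter_mem.2 h

/-- pigeonhole: a nonmeager set covered by countably many sets has a nonmeager piece. -/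
lemma exists_not_isMeagre {ι : Sort*} [Countable ι] {A : Set Cantor} {f : ι → Set Cantor}
    (hA : ¬ IsMeagre A) (hcov : A ⊆ ⋃ i, f i) : ∃ i, ¬ IsMeagre (f i ∩ A) := by
  by_contra h
  push_neg at h
  apply hA
  refine (isMeagre_iUnion' (f := fun i => f i ∩ A) h).mono ?_
  intro x hx
  obtain ⟨i, hi⟩ := mem_iUnion.1 (hcov hx)
  exact mem_iUnion.2 ⟨i, hi, hx⟩

/-- a nonmeager Baire-measurable set is comeager in some cylinder. -/
lemma exists_cyl_comeager {A : Set Cantor} (hA : BaireMeasurableSet A) (hnm : ¬ IsMeagre A) :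
    ∃ v, IsMeagre (cyl v \ A) := by
  obtain ⟨u, hu, heq⟩ := hA.residualEq_isOpen
  have hM : IsMeagre {x | ¬ (x ∈ A ↔ x ∈ u)} := by
    rw [IsMeagre]
    refine Filter.mem_of_superset heq ?_
    intro x hx
    simp only [mem_compl_iff, mem_setOf_eq, not_not]
    exact iff_of_eq hx
  have hune : u.Nonempty := by
    rcases u.eq_empty_or_nonempty with rfl | h
    · exact absurd (hM.mono (fun x hx => by simp [hx])) hnm
    · exact h
  obtain ⟨γ, hγ⟩ := hune
  -- find a cylinder inside u
  obtain ⟨I, uu, huu, hsub⟩ := isOpen_pi_iff.1 hu γ hγ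
  classical
  set n := (I.sup id) + 1 with hn
  refine ⟨(List.range n).map γ, ?_⟩
  have hcylsub : cyl ((List.range n).map γ) ⊆ u := by
    intro δ hδ
    apply hsub
    intro a ha
    have han : a < n := by
      have := Finset.le_sup (f := id) ha
      simp only [id] at this
      omega
    have := hδ a (by simpa)
    rw [this]
    have : ((List.range n).map γ).getD a false = γ a := by
      rw [List.getD_eq_getElem?_getD]
      simp [han]
    rw [this]
    exact (huu a ha).2
  refine (hM.mono ?_)
  intro x hx
  have h1 := hcylsub hx.1
  have h2 := hx.2
  simp only [mem_setOf_eq]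
  tauto



def natOf (w : List Bool) : ℕ := w.foldr (fun b m => Nat.bit b m) 1

lemma natOf_pos (w : List Bool) : 0 < natOf w := by
  induction w with
  | nil => simp [natOf]
  | cons b t ih =>
    show 0 < Nat.bit b (natOf t)
    cases b <;> simp [Nat.bit] <;> omega

lemma length_lt_natOf (w : List Bool) : w.length < natOf w := by
  induction w with
  | nil => simp [natOf]
  | cons b t ih =>
    show t.length + 1 < Nat.bit b (natOf t)
    cases b <;> simp [Nat.bit] <;> omega

lemma bits_natOf (w : List Bool) : (natOf w).bits = w ++ [true] := by
  induction w with
  | nil => simp [natOf]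
  | cons b t ih =>
    show (Nat.bit b (natOf t)).bits = b :: (t ++ [true])
    rw [Nat.bits_append_bit _ _ (fun h => absurd h (natOf_pos t).ne'), ih]

lemma lexEnum_natOf (w : List Bool) : lexEnum (natOf w.reverse - 1) = w := by
  unfold lexEnum
  rw [Nat.sub_add_cancel (natOf_pos w.reverse), bits_natOf, List.dropLast_concat,
    List.reverse_reverse]

/-- density of `ψ`: arbitrarily large `q` with `v` a prefix of `ψ(q)`. -/
lemma exists_psiFun_prefix (v : List Bool) (Q : ℕ) :
    ∃ q, Q ≤ q ∧ v <+: psiFun q := by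
  set w := v ++ List.replicate (Q + 1) false with hw
  refine ⟨2 * (natOf w.reverse - 1), ?_, ?_⟩
  · have h1 := length_lt_natOf w.reverse
    have h2 : w.reverse.length = v.length + (Q + 1) := by simp [hw]; omega
    omega
  · have : psiFun (2 * (natOf w.reverse - 1)) = w := by
      unfold psiFun
      rw [Nat.mul_div_cancel_left _ (by norm_num), lexEnum_natOf]
    rw [this]
    exact List.prefix_append _ _


lemma tSeq_append (φ : List ℕ → Option Ordinal.{0}) (s : List ℕ) (q : ℕ) :
    ∃ b : Bool → List Bool, (∀ ε, tSeq φ ε (s ++ [q]) = tSeq φ ε s ++ b ε) ∧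
      (∀ ε, psiFun q <+: b ε) := by
  refine ⟨fun ε => psiFun q ++ (List.replicate
      (cEnum φ (s ++ [q]) - cEnum φ s - (psiFun q).length - 1) false ++ [ε]),
    fun ε => ?_, fun ε => List.prefix_append _ _⟩
  unfold tSeq
  rw [List.reverse_append]
  show tAux φ ε (q :: s.reverse) = _
  rw [tAux]
  simp [List.append_assoc]

/-- a set which is open in a finer Polish topology is Borel. -/
lemma finerBorel {Z : Type} [tZ : TopologicalSpace Z] [PolishSpace Z] [T2Space Z]
    [mZ : MeasurableSpace Z] [BorelSpace Z] (t' : TopologicalSpace Z) (hle : t' ≤ tZ)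
    (hp : @PolishSpace Z t') {U : Set Z} (hU : @IsOpen Z t' U) : MeasurableSet U := by
  have hcont : @Continuous Z Z t' tZ id := continuous_id_of_le hle
  have hBS : @BorelSpace Z t' (@borel Z t') := @BorelSpace.mk Z t' (@borel Z t') rfl
  have hemb : @MeasurableEmbedding Z Z (@borel Z t') mZ id :=
    @Continuous.measurableEmbedding Z Z mZ tZ _ id _ t' hp (@borel Z t') hBS hcont injective_id
  have hU' : @MeasurableSet Z (@borel Z t') U := by
    clear hemb
    letI := t'
    letI : MeasurableSpace Z := borel Z
    haveI : BorelSpace Z := ⟨rfl⟩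
    exact hU.measurableSet
  have himg : U = (id : Z → Z) '' U := by simp
  rw [himg]
  exact @MeasurableEmbedding.measurableSet_image' Z Z (@borel Z t') mZ id hemb U hU'

lemma countable_Iio (η θ : Ordinal.{0}) (hcount : η.card ≤ Cardinal.aleph0) (h : θ ≤ η) :
    Countable (Set.Iio θ) := by
  rw [← Cardinal.mk_le_aleph0_iff, Ordinal.mk_Iio_ordinal]
  calc Cardinal.lift.{1} θ.card ≤ Cardinal.lift.{1} η.card :=
        Cardinal.lift_le.2 (Ordinal.card_le_card h)
    _ ≤ Cardinal.lift.{1} Cardinal.aleph0 := Cardinal.lift_le.2 hcount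
    _ = Cardinal.aleph0 := by simp

/-- the least element of a nonempty set of ordinals. -/
noncomputable def leastOrd (S : Set Ordinal.{0}) (h : S.Nonempty) : Ordinal.{0} :=
  Ordinal.lt_wf.min S h

lemma leastOrd_mem (S : Set Ordinal.{0}) (h : S.Nonempty) : leastOrd S h ∈ S :=
  Ordinal.lt_wf.min_mem S h

lemma leastOrd_le (S : Set Ordinal.{0}) (h : S.Nonempty) {x : Ordinal.{0}} (hx : x ∈ S) :
    leastOrd S h ≤ x :=
  le_of_not_gt (Ordinal.lt_wf.not_lt_min S hx)

lemma leastOrd_notmem (S : Set Ordinal.{0}) (h : S.Nonempty) {x : Ordinal.{0}}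
    (hx : x < leastOrd S h) : x ∉ S :=
  fun hmem => absurd hx (not_lt_of_ge (leastOrd_le S h hmem))


end Aux6

namespace Aux6

/-- the pair map `γ ↦ (t⁰_s ⌢ γ, t¹_s ⌢ γ)`. -/
noncomputable def mp (φ : List ℕ → Option Ordinal.{0}) (s : List ℕ) (γ : Cantor) :
    Cantor × Cantor :=
  (appendSeq (tSeq φ false s) γ, appendSeq (tSeq φ true s) γ)

lemma continuous_mp (φ : List ℕ → Option Ordinal.{0}) (s : List ℕ) :
    Continuous (mp φ s) :=
  (continuous_appendSeq _).prodMk (continuous_appendSeq _)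

lemma mem_NNset_of_even {φ : List ℕ → Option Ordinal.{0}} {s : List ℕ}
    (hs : φ s ≠ none) (he : Even s.length) (γ : Cantor) :
    mp φ s γ ∈ NNset φ false :=
  ⟨s, γ, hs, by simp [he], rfl, rfl⟩

lemma mem_NNset_of_odd {φ : List ℕ → Option Ordinal.{0}} {s : List ℕ}
    (hs : φ s ≠ none) (he : ¬ Even s.length) (γ : Cantor) :
    mp φ s γ ∈ NNset φ true :=
  ⟨s, γ, hs, by simp [he], rfl, rfl⟩

/-- the invariant of the transfinite descent. -/
def INV (η : Ordinal.{0}) (φ : List ℕ → Option Ordinal.{0}) (C : Set Cantor)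
    (O : Ordinal.{0} → Set (Cantor × Cantor)) (s : List ℕ) (ξ θ : Ordinal.{0})
    (w : List Bool) : Prop :=
  φ s = some ξ ∧ θ < ξ ∧ ((OrdEven θ ↔ OrdEven η) ↔ ¬ Even s.length) ∧
  (∀ γ ∈ cyl w, mp φ s γ ∈ C ×ˢ C) ∧
  IsMeagre (cyl w \ {γ | mp φ s γ ∈ O θ})

lemma isMeagre_union {A B : Set Cantor} (hA : IsMeagre A) (hB : IsMeagre B) :
    IsMeagre (A ∪ B) := by
  rw [IsMeagre, compl_union]
  exact Filter.inter_mem hA hB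

lemma not_isMeagre_inter_of_comeager {A : Set Cantor} {w : List Bool}
    (h : IsMeagre (cyl w \ A)) : ¬ IsMeagre (cyl w ∩ A) := by
  intro h2
  apply not_isMeagre_cyl w
  refine (isMeagre_union h h2).mono ?_
  intro x hx
  by_cases hA : x ∈ A
  · exact Or.inr ⟨hx, hA⟩
  · exact Or.inl ⟨hx, hA⟩

lemma not_isMeagre_of_compl_isMeagre {A : Set Cantor} (h : IsMeagre Aᶜ) : ¬ IsMeagre A := by
  intro h2
  refine not_isMeagre_of_isOpen isOpen_univ ⟨fun _ => false, trivial⟩ ?_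
  refine (isMeagre_union h2 h).mono ?_
  intro x _
  by_cases hx : x ∈ A
  · exact Or.inl hx
  · exact Or.inr hx

/-- the parity of the least rank of a point of `ℕ^η_ε ∩ C²`. -/
lemma rank_parity (η : Ordinal.{0}) (φ : List ℕ → Option Ordinal.{0}) (C : Set Cantor)
    (O : Ordinal.{0} → Set (Cantor × Cantor))
    (hA : NNset φ false ∩ C ×ˢ C ⊆ DiffSet η O)
    (hB : Disjoint (DiffSet η O) (NNset φ true ∩ C ×ˢ C))
    {s : List ℕ} (hs : φ s ≠ none) {γ : Cantor}
    (hC2 : mp φ s γ ∈ C ×ˢ C)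
    (hne : {θ' | θ' < η ∧ mp φ s γ ∈ O θ'}.Nonempty) :
    (OrdEven (leastOrd _ hne) ↔ OrdEven η) ↔ ¬ Even s.length := by
  have hρmem := leastOrd_mem _ hne
  by_cases he : Even s.length
  · -- A-point: in the separating set
    have hmem : mp φ s γ ∈ DiffSet η O := hA ⟨mem_NNset_of_even hs he γ, hC2⟩
    obtain ⟨th, hthη, hpar, hpO, hmin⟩ := hmem
    have h1 : leastOrd _ hne ≤ th := leastOrd_le _ hne ⟨hthη, hpO⟩
    have h2 : ¬ leastOrd _ hne < th := fun hlt => hmin _ hlt hρmem.2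
    have heq : leastOrd _ hne = th := le_antisymm h1 (not_lt.1 h2)
    rw [heq]
    simp only [he, not_true_eq_false, iff_false]
    tauto
  · -- B-point: outside the separating set
    have hnmem : mp φ s γ ∉ DiffSet η O :=
      Set.disjoint_left.1 hB.symm ⟨mem_NNset_of_odd hs he γ, hC2⟩
    simp only [he, not_false_eq_true, iff_true]
    by_contra hpar
    apply hnmem
    refine ⟨leastOrd _ hne, hρmem.1, by tauto, hρmem.2, fun θ' hθ' hO' => ?_⟩
    exact leastOrd_notmem _ hne hθ' ⟨lt_trans hθ' hρmem.1, hO'⟩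

/-- a wrapper for a pair of topologies, to keep them out of the instance cache. -/
structure TwoTops : Type 1 where
  sig : TopologicalSpace Cantor
  tau : TopologicalSpace Cantor

/-- the product of the two finer topologies. -/
def Tp (T : TwoTops) : TopologicalSpace (Cantor × Cantor) :=
  @instTopologicalSpaceProd Cantor Cantor T.sig T.tau

/-- goodness of the pair of topologies. -/
def GoodT (T : TwoTops) : Prop :=
  T.sig ≤ (inferInstance : TopologicalSpace Cantor) ∧
  T.tau ≤ (inferInstance : TopologicalSpace Cantor) ∧
  @PolishSpace Cantor T.sig ∧ @PolishSpace Cantor T.tau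

lemma Tp_le (T : TwoTops) (hT : GoodT T) :
    Tp T ≤ (inferInstance : TopologicalSpace (Cantor × Cantor)) := by
  have c1 : @Continuous Cantor Cantor T.sig _ id := continuous_id_of_le hT.1
  have c2 : @Continuous Cantor Cantor T.tau _ id := continuous_id_of_le hT.2.1
  have c : @Continuous _ _ (Tp T) _ (Prod.map (id : Cantor → Cantor) (id : Cantor → Cantor)) :=
    @Continuous.prodMap Cantor Cantor Cantor Cantor _ _ T.sig T.tau id id c1 c2
  rw [Prod.map_id] at c
  exact continuous_id_iff_le.1 c

lemma polish_prod {X Y : Type} [TopologicalSpace X] [TopologicalSpace Y] [PolishSpace X]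
    [PolishSpace Y] : PolishSpace (X × Y) := inferInstance

lemma Tp_polish (T : TwoTops) (hT : GoodT T) : @PolishSpace (Cantor × Cantor) (Tp T) :=
  @polish_prod Cantor Cantor T.sig T.tau hT.2.2.1 hT.2.2.2

/-- Borelness of sets which are open in the finer product topology. -/
lemma borel_of_Tp_open (T : TwoTops) (hT : GoodT T)
    {U : Set (Cantor × Cantor)} (hU : @IsOpen _ (Tp T) U) : MeasurableSet U :=
  by haveI : PolishSpace Cantor := PolishSpace.mk
     haveI : PolishSpace (Cantor × Cantor) := polish_prod
     exact finerBorel (Tp T) (Tp_le T hT) (Tp_polish T hT) hU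

/-- a countable family of rectangles generating the finer product topology. -/
lemma rect_basis (T : TwoTops) (hT : GoodT T) :
    ∃ B : Set (Set (Cantor × Cantor)), B.Countable ∧
      (∀ R ∈ B, @IsOpen _ (Tp T) R ∧ ∃ U V : Set Cantor, R = U ×ˢ V) ∧
      (∀ W, @IsOpen _ (Tp T) W → ∃ B' ⊆ B, W = ⋃₀ B') := by
  obtain ⟨B₁, hc₁, -, hb₁⟩ :=
    @TopologicalSpace.exists_countable_basis Cantor T.sig hT.2.2.1.toSecondCountableTopology
  obtain ⟨B₂, hc₂, -, hb₂⟩ :=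
    @TopologicalSpace.exists_countable_basis Cantor T.tau hT.2.2.2.toSecondCountableTopology
  have hb : @TopologicalSpace.IsTopologicalBasis (Cantor × Cantor) (Tp T)
      (Set.image2 (fun x1 x2 => x1 ×ˢ x2) B₁ B₂) :=
    @TopologicalSpace.IsTopologicalBasis.prod Cantor Cantor T.sig T.tau B₁ B₂ hb₁ hb₂
  refine ⟨Set.image2 (fun x1 x2 => x1 ×ˢ x2) B₁ B₂, hc₁.image2 hc₂ _, ?_, ?_⟩
  · rintro R hR
    refine ⟨@TopologicalSpace.IsTopologicalBasis.isOpen _ (Tp T) _ _ hb hR, ?_⟩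
    obtain ⟨U, -, V, -, rfl⟩ := hR
    exact ⟨U, V, rfl⟩
  · intro W hW
    exact @TopologicalSpace.IsTopologicalBasis.open_eq_sUnion _ (Tp T) _ hb W hW

/-- THE DESCENT STEP. -/
lemma descent (η : Ordinal.{0}) (φ : List ℕ → Option Ordinal.{0}) (C : Set Cantor)
    (T : TwoTops) (O : Ordinal.{0} → Set (Cantor × Cantor))
    (hφ : PhiSpec η φ) (hcount : η.card ≤ Cardinal.aleph0) (hT : GoodT T)
    (hOopen : ∀ θ', θ' < η → @IsOpen _ (Tp T) (O θ'))
    (hA : NNset φ false ∩ C ×ˢ C ⊆ DiffSet η O)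
    (hB : Disjoint (DiffSet η O) (NNset φ true ∩ C ×ˢ C))
    {s : List ℕ} {ξ θ : Ordinal.{0}} {w : List Bool}
    (hinv : INV η φ C O s ξ θ w) :
    ∃ s' ξ' θ' w', θ' < θ ∧ INV η φ C O s' ξ' θ' w' := by
  obtain ⟨hφs, hθξ, hpar, hC, hO⟩ := hinv
  have hξη : ξ ≤ η := hφ.2.1 s ξ hφs
  have hθη : θ < η := lt_of_lt_of_le hθξ hξη
  have hBorelO : ∀ θ', θ' < η → MeasurableSet (O θ') := fun θ' h =>
    borel_of_Tp_open T hT (hOopen θ' h)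
  -- find a rectangle U × V ⊆ O θ on which the O θ-membership is non-meager
  obtain ⟨B, hBc, hBrect, hBcov⟩ := rect_basis T hT
  obtain ⟨B', hB'B, hB'cov⟩ := hBcov (O θ) (hOopen θ hθη)
  have hB'c : B'.Countable := hBc.mono hB'B
  have hPnm : ¬ IsMeagre (cyl w ∩ {γ | mp φ s γ ∈ O θ}) := not_isMeagre_inter_of_comeager hO
  haveI : Countable B' := hB'c.to_subtype
  have hcov : cyl w ∩ {γ | mp φ s γ ∈ O θ} ⊆
      ⋃ R : B', (cyl w ∩ mp φ s ⁻¹' (R : Set (Cantor × Cantor))) := by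
    rintro γ ⟨h1, h2⟩
    rw [hB'cov] at h2
    obtain ⟨R, hR, hγR⟩ := h2
    exact mem_iUnion.2 ⟨⟨R, hR⟩, h1, hγR⟩
  obtain ⟨⟨R, hRB'⟩, hRnm⟩ := exists_not_isMeagre hPnm hcov
  obtain ⟨hRopen, U, V, rfl⟩ := hBrect R (hB'B hRB')
  have hRsub : U ×ˢ V ⊆ O θ := by
    rw [hB'cov]; exact fun x hx => ⟨U ×ˢ V, hRB', hx⟩
  -- the set D is Baire measurable and non-meager, hence comeager in some cylinder
  set D := cyl w ∩ mp φ s ⁻¹' (U ×ˢ V) with hDdef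
  have hDnm : ¬ IsMeagre D := fun h => hRnm (h.mono (s := D) (fun x hx => ⟨hx.1.1, hx.1.2⟩))
  have hDmeas : MeasurableSet D :=
    ((isOpen_cyl w).measurableSet).inter
      ((continuous_mp φ s).measurable (borel_of_Tp_open T hT hRopen))
  obtain ⟨v, hv⟩ := exists_cyl_comeager hDmeas.baireMeasurableSet hDnm
  have hDw : D ⊆ cyl w := fun x hx => hx.1
  have hvw : cyl v ⊆ cyl w := by
    have hopen : IsOpen (cyl v \ cyl w) := (isOpen_cyl v).sdiff (isClosed_cyl w)
    have hm : IsMeagre (cyl v \ cyl w) :=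
      hv.mono (s := cyl v \ D) (fun x hx => ⟨hx.1, fun hD' => hx.2 (hDw hD')⟩)
    have hemp := eq_empty_of_isOpen_isMeagre hopen hm
    intro x hx
    by_contra hxw
    exact absurd hemp (Set.nonempty_iff_ne_empty.1 ⟨x, hx, hxw⟩)
  -- choose the child q
  obtain ⟨q, ξ', hq1, hψq, hq3⟩ :
      ∃ q ξ', φ (s ++ [q]) = some ξ' ∧ v <+: psiFun q ∧ θ ≤ ξ' := by
    obtain hξ0 | ⟨a, hsucc⟩ | hlim := Ordinal.zero_or_succ_or_isSuccLimit ξ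
    · rw [hξ0] at hθξ
      exact absurd hθξ (by simp)
    · obtain ⟨q, -, hψq⟩ := exists_psiFun_prefix v 0
      refine ⟨q, a, hφ.2.2.2.2.1 s a q ?_, hψq, ?_⟩
      · rw [hφs, ← hsucc, Ordinal.add_one_eq_succ]
      · rw [← hsucc] at hθξ
        exact Order.lt_succ_iff.1 hθξ
    · obtain ⟨θf, hθf, hmono, -, hcof⟩ := hφ.2.2.2.2.2 s ξ hφs hlim
      obtain ⟨n₀, hn₀⟩ := hcof θ hθξ
      obtain ⟨q, hqn, hψq⟩ := exists_psiFun_prefix v n₀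
      exact ⟨q, θf q, hθf q, hψq, le_trans hn₀ (hmono.monotone hqn)⟩
  -- the two blocks glued after t⁰_s, t¹_s
  obtain ⟨b, htb, hbpre⟩ := tSeq_append φ s q
  have hbv : ∀ ε, v <+: b ε := fun ε => hψq.trans (hbpre ε)
  have hmpchild : ∀ γ', mp φ (s ++ [q]) γ' =
      (appendSeq (tSeq φ false s) (appendSeq (b false) γ'),
       appendSeq (tSeq φ true s) (appendSeq (b true) γ')) := by
    intro γ'
    unfold mp
    rw [htb false, htb true, appendSeq_append, appendSeq_append]
  set X : Set Cantor := (appendSeq (b false) ⁻¹' D) ∩ (appendSeq (b true) ⁻¹' D) with hXdef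
  have hXco : IsMeagre Xᶜ := by
    rw [hXdef, Set.compl_inter]
    refine isMeagre_union ?_ ?_
    · refine (meagre_preimage_appendSeq hv (b false)).mono ?_
      intro γ' hγ'
      exact ⟨appendSeq_mem_cyl_of_prefix (hbv false) γ', hγ'⟩
    · refine (meagre_preimage_appendSeq hv (b true)).mono ?_
      intro γ' hγ'
      exact ⟨appendSeq_mem_cyl_of_prefix (hbv true) γ', hγ'⟩
  -- membership facts for γ' ∈ X
  have hXmem : ∀ γ' ∈ X, mp φ (s ++ [q]) γ' ∈ O θ ∧ mp φ (s ++ [q]) γ' ∈ C ×ˢ C := by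
    rintro γ' ⟨h0, h1⟩
    have c0 : mp φ s (appendSeq (b false) γ') ∈ U ×ˢ V := h0.2
    have c1 : mp φ s (appendSeq (b true) γ') ∈ U ×ˢ V := h1.2
    have d0 : mp φ s (appendSeq (b false) γ') ∈ C ×ˢ C := hC _ h0.1
    have d1 : mp φ s (appendSeq (b true) γ') ∈ C ×ˢ C := hC _ h1.1
    constructor
    · apply hRsub
      rw [hmpchild]
      exact ⟨(Set.mem_prod.1 c0).1, (Set.mem_prod.1 c1).2⟩
    · rw [hmpchild]
      exact ⟨(Set.mem_prod.1 d0).1, (Set.mem_prod.1 d1).2⟩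
  have hsq : φ (s ++ [q]) ≠ none := by rw [hq1]; simp
  have hRne : ∀ γ' ∈ X, {θ' | θ' < η ∧ mp φ (s ++ [q]) γ' ∈ O θ'}.Nonempty :=
    fun γ' hγ' => ⟨θ, hθη, (hXmem γ' hγ').1⟩
  -- partition X according to the least rank
  haveI : Countable (Set.Iio θ) := countable_Iio η θ hcount (le_of_lt hθη)
  set Y : Set.Iio θ → Set Cantor := fun t =>
    (X ∩ {γ' | mp φ (s ++ [q]) γ' ∈ O t.1}) ∩
      {γ' | ∀ θ'', θ'' < t.1 → mp φ (s ++ [q]) γ' ∉ O θ''} with hYdef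
  have hparflip : ¬ Even (s ++ [q]).length ↔ Even s.length := by
    rw [List.length_append, List.length_singleton, Nat.even_add_one, not_not]
  have hcovX : X ⊆ ⋃ t : Set.Iio θ, Y t := by
    intro γ' hγ'
    have hρmem := leastOrd_mem _ (hRne γ' hγ')
    have hρpar := rank_parity η φ C O hA hB hsq (hXmem γ' hγ').2 (hRne γ' hγ')
    have hρθ : leastOrd _ (hRne γ' hγ') ≤ θ := leastOrd_le _ _ ⟨hθη, (hXmem γ' hγ').1⟩
    have hρne : leastOrd _ (hRne γ' hγ') ≠ θ := by
      intro hEq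
      rw [hEq, hparflip] at hρpar
      tauto
    refine mem_iUnion.2 ⟨⟨leastOrd _ (hRne γ' hγ'), lt_of_le_of_ne hρθ hρne⟩,
      ⟨hγ', hρmem.2⟩, fun θ'' hθ'' hO'' => ?_⟩
    exact leastOrd_notmem _ (hRne γ' hγ') hθ'' ⟨lt_trans hθ'' hρmem.1, hO''⟩
  have hXnm : ¬ IsMeagre X := not_isMeagre_of_compl_isMeagre hXco
  obtain ⟨t0, ht0⟩ := exists_not_isMeagre hXnm hcovX
  -- the piece Y t0 is Baire measurable
  have hmeasChild : ∀ θ', θ' < η → MeasurableSet {γ' | mp φ (s ++ [q]) γ' ∈ O θ'} :=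
    fun θ' h => (continuous_mp φ (s ++ [q])).measurable (hBorelO θ' h)
  have ht0η : t0.1 < η := lt_trans t0.2 hθη
  have hXmeas : MeasurableSet X :=
    ((continuous_appendSeq (b false)).measurable hDmeas).inter
      ((continuous_appendSeq (b true)).measurable hDmeas)
  have hYmeas : MeasurableSet (Y t0) := by
    refine (hXmeas.inter (hmeasChild t0.1 ht0η)).inter ?_
    have heq : {γ' | ∀ θ'', θ'' < t0.1 → mp φ (s ++ [q]) γ' ∉ O θ''} =
        ⋂ u : Set.Iio t0.1, {γ' | mp φ (s ++ [q]) γ' ∈ O u.1}ᶜ := by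
      ext x
      simp only [mem_setOf_eq, mem_iInter, mem_compl_iff, Subtype.forall, Set.mem_Iio]
    rw [heq]
    haveI : Countable (Set.Iio t0.1) := countable_Iio η t0.1 hcount (le_of_lt ht0η)
    exact MeasurableSet.iInter fun u => (hmeasChild u.1 (lt_trans u.2 ht0η)).compl
  obtain ⟨w', hw'⟩ := exists_cyl_comeager hYmeas.baireMeasurableSet
    (fun h => ht0 (h.mono inter_subset_left))
  -- parity of t0 via a witness point
  have hYne : (Y t0 ∩ X).Nonempty := by
    by_contra h
    rw [not_nonempty_iff_eq_empty] at h
    refine ht0 ?_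
    rw [h]
    exact IsMeagre.empty
  obtain ⟨γ0, hγ0Y, hγ0X⟩ := hYne
  have ht0eq : leastOrd _ (hRne γ0 hγ0X) = t0.1 := by
    apply le_antisymm
    · exact leastOrd_le _ _ ⟨ht0η, hγ0Y.1.2⟩
    · by_contra hlt
      push_neg at hlt
      exact hγ0Y.2 _ hlt (leastOrd_mem _ (hRne γ0 hγ0X)).2
  have ht0par := rank_parity η φ C O hA hB hsq (hXmem γ0 hγ0X).2 (hRne γ0 hγ0X)
  rw [ht0eq] at ht0par
  -- assemble the child invariant
  refine ⟨s ++ [q], ξ', t0.1, w', t0.2, hq1, lt_of_lt_of_le t0.2 hq3, ht0par, ?_, ?_⟩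
  · intro γ'' _
    rw [hmpchild]
    exact ⟨(Set.mem_prod.1 (hC _ (hvw (appendSeq_mem_cyl_of_prefix (hbv false) γ'')))).1,
      (Set.mem_prod.1 (hC _ (hvw (appendSeq_mem_cyl_of_prefix (hbv true) γ'')))).2⟩
  · refine hw'.mono ?_
    rintro x ⟨hx1, hx2⟩
    exact ⟨hx1, fun hY => hx2 hY.1.2⟩

/-- INITIALIZATION OF THE DESCENT. -/
lemma init (η : Ordinal.{0}) (φ : List ℕ → Option Ordinal.{0}) (C : Set Cantor)
    (O : Ordinal.{0} → Set (Cantor × Cantor))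
    (hφ : PhiSpec η φ) (hcount : η.card ≤ Cardinal.aleph0)
    (hBorelO : ∀ θ', θ' < η → MeasurableSet (O θ'))
    (hA : NNset φ false ∩ C ×ˢ C ⊆ DiffSet η O)
    (hB : Disjoint (DiffSet η O) (NNset φ true ∩ C ×ˢ C))
    (hne : C.Nonempty) (hcl : IsClopen C) :
    ∃ θ₀ w₀, θ₀ < η ∧ INV η φ C O [] η θ₀ w₀ := by
  have hs0 : φ [] ≠ none := by rw [hφ.1]; simp
  have hmp0 : ∀ γ, mp φ [] γ = (γ, γ) := by
    intro γ
    unfold mp tSeq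
    simp only [List.reverse_nil]
    show (appendSeq (tAux φ false []) γ, appendSeq (tAux φ true []) γ) = (γ, γ)
    rw [show tAux φ false [] = [] from rfl, show tAux φ true [] = [] from rfl,
      appendSeq_nil]
  have hCmem : ∀ γ ∈ C, mp φ [] γ ∈ C ×ˢ C := by
    intro γ hγ
    rw [hmp0]
    exact ⟨hγ, hγ⟩
  have hRne : ∀ γ ∈ C, {θ' | θ' < η ∧ mp φ [] γ ∈ O θ'}.Nonempty := by
    intro γ hγ
    have hmem : mp φ [] γ ∈ DiffSet η O :=
      hA ⟨mem_NNset_of_even hs0 (by simp) γ, hCmem γ hγ⟩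
    obtain ⟨th, h1, -, h3, -⟩ := hmem
    exact ⟨th, h1, h3⟩
  haveI : Countable (Set.Iio η) := countable_Iio η η hcount le_rfl
  set Y : Set.Iio η → Set Cantor := fun t =>
    (C ∩ {γ | mp φ [] γ ∈ O t.1}) ∩
      {γ | ∀ θ'', θ'' < t.1 → mp φ [] γ ∉ O θ''} with hYdef
  have hcovC : C ⊆ ⋃ t : Set.Iio η, Y t := by
    intro γ hγ
    have hρmem := leastOrd_mem _ (hRne γ hγ)
    refine mem_iUnion.2 ⟨⟨leastOrd _ (hRne γ hγ), hρmem.1⟩, ⟨hγ, hρmem.2⟩,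
      fun θ'' hθ'' hO'' => ?_⟩
    exact leastOrd_notmem _ (hRne γ hγ) hθ'' ⟨lt_trans hθ'' hρmem.1, hO''⟩
  have hCnm : ¬ IsMeagre C := not_isMeagre_of_isOpen hcl.2 hne
  obtain ⟨t0, ht0⟩ := exists_not_isMeagre hCnm hcovC
  have hmeas0 : ∀ θ', θ' < η → MeasurableSet {γ | mp φ [] γ ∈ O θ'} :=
    fun θ' h => (continuous_mp φ []).measurable (hBorelO θ' h)
  have hYmeas : MeasurableSet (Y t0) := by
    refine ((hcl.2.measurableSet).inter (hmeas0 t0.1 t0.2)).inter ?_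
    have heq : {γ | ∀ θ'', θ'' < t0.1 → mp φ [] γ ∉ O θ''} =
        ⋂ u : Set.Iio t0.1, {γ | mp φ [] γ ∈ O u.1}ᶜ := by
      ext x
      simp only [mem_setOf_eq, mem_iInter, mem_compl_iff, Subtype.forall, Set.mem_Iio]
    rw [heq]
    haveI : Countable (Set.Iio t0.1) := countable_Iio η t0.1 hcount (le_of_lt t0.2)
    exact MeasurableSet.iInter fun u => (hmeas0 u.1 (lt_trans u.2 t0.2)).compl
  obtain ⟨w₀, hw₀⟩ := exists_cyl_comeager hYmeas.baireMeasurableSet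
    (fun h => ht0 (h.mono inter_subset_left))
  -- the cylinder is inside C
  have hw₀C : cyl w₀ ⊆ C := by
    have hopen : IsOpen (cyl w₀ \ C) := (isOpen_cyl w₀).sdiff hcl.1
    have hm : IsMeagre (cyl w₀ \ C) := hw₀.mono (s := cyl w₀ \ Y t0) (fun x hx => ⟨hx.1, fun hY => hx.2 hY.1.1⟩)
    have hemp := eq_empty_of_isOpen_isMeagre hopen hm
    intro x hx
    by_contra hxC
    exact absurd hemp (Set.nonempty_iff_ne_empty.1 ⟨x, hx, hxC⟩)
  -- parity of t0 via a witness point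
  have hYne : (Y t0 ∩ C).Nonempty := by
    by_contra h
    rw [not_nonempty_iff_eq_empty] at h
    refine ht0 ?_
    rw [h]
    exact IsMeagre.empty
  obtain ⟨γ0, hγ0Y, hγ0C⟩ := hYne
  have ht0eq : leastOrd _ (hRne γ0 hγ0C) = t0.1 := by
    apply le_antisymm
    · exact leastOrd_le _ _ ⟨t0.2, hγ0Y.1.2⟩
    · by_contra hlt
      push_neg at hlt
      exact hγ0Y.2 _ hlt (leastOrd_mem _ (hRne γ0 hγ0C)).2
  have ht0par := rank_parity η φ C O hA hB hs0 (hCmem γ0 hγ0C) (hRne γ0 hγ0C)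
  rw [ht0eq] at ht0par
  refine ⟨t0.1, w₀, t0.2, hφ.1, t0.2, by simpa using ht0par, ?_, ?_⟩
  · intro γ hγ
    exact hCmem γ (hw₀C hγ)
  · refine hw₀.mono ?_
    rintro x ⟨hx1, hx2⟩
    exact ⟨hx1, fun hY => hx2 hY.1.2⟩

end Aux6
/-- for a countable ordinal `η` and a nonempty clopen `C ⊆ 2^ω`, the set
`ℕ^η_0 ∩ C²` is not separable from `ℕ^η_1 ∩ C²` by a `pot(D_η(Σ^0_1))` set. -/
theorem statement6 (η : Ordinal.{0}) (hcount : η.card ≤ Cardinal.aleph0)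
    (φ : List ℕ → Option Ordinal.{0}) (hφ : PhiSpec η φ)
    (C : Set Cantor) (hne : C.Nonempty) (hcl : IsClopen C) :
    ¬ SepPot (DClass η openClass) (NNset φ false ∩ C ×ˢ C) (NNset φ true ∩ C ×ˢ C) := by
  rintro ⟨S, ⟨σ, τ, hσ, hτ, hσp, hτp, hΓ⟩, hAS, hSB⟩
  obtain ⟨O, hOopen, -, hSdef⟩ := hΓ
  subst hSdef
  have hGood : Aux6.GoodT ⟨σ, τ⟩ := ⟨hσ, hτ, hσp, hτp⟩
  have hOopen' : ∀ θ', θ' < η → @IsOpen _ (Aux6.Tp ⟨σ, τ⟩) (O θ') := hOopen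
  have hBorelO : ∀ θ', θ' < η → MeasurableSet (O θ') := fun θ' h =>
    Aux6.borel_of_Tp_open ⟨σ, τ⟩ hGood (hOopen' θ' h)
  obtain ⟨θ₀, w₀, hθ₀, hinv⟩ := Aux6.init η φ C O hφ hcount hBorelO hAS hSB hne hcl
  have noinv : ∀ θ : Ordinal.{0}, ∀ s ξ w, ¬ Aux6.INV η φ C O s ξ θ w := by
    intro θ
    induction θ using Ordinal.induction with
    | h θ IH =>
      intro s ξ w hinv
      obtain ⟨s', ξ', θ', w', hlt, hinv'⟩ :=
        Aux6.descent η φ C ⟨σ, τ⟩ O hφ hcount hGood hOopen' hAS hSB hinv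
      exact IH θ' hlt s' ξ' w' hinv'
  exact noinv θ₀ [] η w₀ hinv
end

section
/- Let η ≥ 1 be a countable ordinal and C a nonempty clopen subset of 2^ω. Then 𝕊^η_0 ∩ C² is not separable from 𝕊^η_1 ∩ C² by a pot(Δ(D_η(Σ^0_1))) set. -/
open Set Function

section lex

lemma bits_succ_ne_nil (m : ℕ) : (m + 1).bits ≠ [] := by
  rcases Nat.even_or_odd (m + 1) with ⟨k, hk⟩ | ⟨k, hk⟩
  · have hk' : k ≠ 0 := by omega
    rw [show m + 1 = 2 * k by omega, Nat.bit0_bits _ hk']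
    simp
  · rw [show m + 1 = 2 * k + 1 by omega, Nat.bit1_bits]
    simp

lemma lexEnum_zero : lexEnum 0 = [] := by
  simp [lexEnum, Nat.one_bits]

lemma lexEnum_snoc (m : ℕ) (b : Bool) :
    lexEnum (2 * (m + 1) + (cond b 1 0) - 1) = lexEnum m ++ [b] := by
  have h1 : 2 * (m + 1) + (cond b 1 0) - 1 + 1 = 2 * (m + 1) + (cond b 1 0) := by
    cases b <;> simp <;> omega
  unfold lexEnum
  rw [h1]
  have hbits : (2 * (m + 1) + (cond b 1 0)).bits = b :: (m + 1).bits := by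
    cases b
    · simpa using Nat.bit0_bits (m + 1) (by omega)
    · simpa using Nat.bit1_bits (m + 1)
  rw [hbits, List.dropLast_cons_of_ne_nil (bits_succ_ne_nil m), List.reverse_cons]

lemma lexEnum_pad (j m : ℕ) :
    lexEnum (2 ^ j * (m + 1) - 1) = lexEnum m ++ List.replicate j false := by
  induction j with
  | zero => simp
  | succ j ih =>
    have hpos : 1 ≤ 2 ^ j * (m + 1) := Nat.one_le_iff_ne_zero.mpr (by positivity)
    have harith : 2 ^ (j + 1) * (m + 1) - 1 = 2 * ((2 ^ j * (m + 1) - 1) + 1) + (cond false 1 0) - 1 := by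
      simp only [cond]
      rw [Nat.sub_add_cancel hpos]
      congr 1
      ring
    rw [harith, lexEnum_snoc, ih, List.append_assoc, ← List.replicate_succ' (n := j) (a := false)]

lemma lexEnum_surj (w : List Bool) : ∃ m, lexEnum m = w := by
  induction w using List.reverseRecOn with
  | nil => exact ⟨0, lexEnum_zero⟩
  | append_singleton w b ih =>
    obtain ⟨m, hm⟩ := ih
    exact ⟨2 * (m + 1) + (cond b 1 0) - 1, by rw [lexEnum_snoc, hm]⟩

lemma lexEnum_extend (w : List Bool) (N : ℕ) : ∃ m, N ≤ m ∧ w <+: lexEnum m := by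
  obtain ⟨m₀, hm₀⟩ := lexEnum_surj w
  refine ⟨2 ^ N * (m₀ + 1) - 1, ?_, ?_⟩
  · have h2 : N < 2 ^ N := Nat.lt_two_pow_self
    have : 2 ^ N ≤ 2 ^ N * (m₀ + 1) := Nat.le_mul_of_pos_right _ (by omega)
    omega
  · rw [lexEnum_pad, hm₀]
    exact List.prefix_append _ _

lemma psiFun_two_mul (m : ℕ) (c : ℕ) (hc : c < 2) : psiFun (2 * m + c) = lexEnum m := by
  unfold psiFun
  congr 1
  omega

end lex

-- AUX2 START
section seqs

lemma appendSeq_lt (u : List Bool) (γ : Cantor) {k : ℕ} (h : k < u.length) :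
    appendSeq u γ k = u.getD k false := if_pos h

lemma appendSeq_ge (u : List Bool) (γ : Cantor) {k : ℕ} (h : u.length ≤ k) :
    appendSeq u γ k = γ (k - u.length) := if_neg (by omega)

lemma appendSeq_append (u v : List Bool) (γ : Cantor) :
    appendSeq (u ++ v) γ = appendSeq u (appendSeq v γ) := by
  funext k
  rcases lt_or_ge k u.length with h1 | h1
  · rw [appendSeq_lt _ _ (by simp only [List.length_append]; omega), appendSeq_lt _ _ h1,
      List.getD_append _ _ _ _ h1]
  · rcases lt_or_ge k (u.length + v.length) with h2 | h2
    · rw [appendSeq_lt _ _ (by simp only [List.length_append]; omega), appendSeq_ge _ _ h1,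
        appendSeq_lt _ _ (by omega)]
      rw [List.getD_append_right _ _ _ _ h1]
    · rw [appendSeq_ge _ _ (by simp only [List.length_append]; omega), appendSeq_ge _ _ h1,
        appendSeq_ge _ _ (by omega)]
      congr 1
      simp only [List.length_append]
      omega

lemma appendSeq_agree (t : List Bool) {γ γ' : Cantor} {M : ℕ} (h : ∀ j, j < M → γ j = γ' j)
    {k : ℕ} (hk : k < M) : appendSeq t γ k = appendSeq t γ' k := by
  rcases lt_or_ge k t.length with h1 | h1
  · rw [appendSeq_lt _ _ h1, appendSeq_lt _ _ h1]
  · rw [appendSeq_ge _ _ h1, appendSeq_ge _ _ h1]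
    exact h _ (by omega)

lemma isPrefix_getD {w v : List Bool} (h : w <+: v) {k : ℕ} (hk : k < w.length) :
    v.getD k false = w.getD k false := by
  obtain ⟨t, rfl⟩ := h
  exact List.getD_append _ _ _ _ hk

lemma listInit_getD (γ : Cantor) (M k : ℕ) (hk : k < M) :
    ((List.range M).map γ).getD k false = γ k := by
  rw [List.getD_eq_getElem _ _ (by simpa using hk)]
  simp

lemma continuous_appendSeq (u : List Bool) : Continuous (appendSeq u) := by
  apply continuous_pi
  intro n
  rcases lt_or_ge n u.length with h | h
  · simp only [appendSeq, if_pos h]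
    exact continuous_const
  · simp only [appendSeq, if_neg (by omega : ¬ n < u.length)]
    exact continuous_apply _

end seqs

section cylinders

lemma isOpen_cylinder (α : Cantor) (M : ℕ) : IsOpen {β : Cantor | ∀ k, k < M → β k = α k} := by
  have h : {β : Cantor | ∀ k, k < M → β k = α k}
      = ⋂ k ∈ Finset.range M, (fun β : Cantor => β k) ⁻¹' {α k} := by
    ext β
    simp [Finset.mem_range]
  rw [h]
  exact isOpen_biInter_finset fun k _ => (isOpen_discrete _).preimage (continuous_apply k)

lemma exists_cylinder_subset {U : Set Cantor} (hU : IsOpen U) {α : Cantor} (hα : α ∈ U) :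
    ∃ M, ∀ β : Cantor, (∀ k, k < M → β k = α k) → β ∈ U := by
  obtain ⟨I, u, h1, h2⟩ := isOpen_pi_iff.mp hU α hα
  refine ⟨I.sup id + 1, fun β hβ => h2 ?_⟩
  intro a ha
  rw [show β a = α a from hβ a (Nat.lt_succ_of_le (Finset.le_sup (f := id) ha))]
  exact (h1 a ha).2

lemma exists_cylinder_subset_prod {W : Set (Cantor × Cantor)} (hW : IsOpen W)
    {x : Cantor × Cantor} (hx : x ∈ W) :
    ∃ M, ∀ p : Cantor × Cantor,
      (∀ k, k < M → p.1 k = x.1 k) → (∀ k, k < M → p.2 k = x.2 k) → p ∈ W := by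
  obtain ⟨u, v, hu, hv, hxu, hxv, huv⟩ := isOpen_prod_iff.mp hW x.1 x.2 hx
  obtain ⟨M1, hM1⟩ := exists_cylinder_subset hu hxu
  obtain ⟨M2, hM2⟩ := exists_cylinder_subset hv hxv
  refine ⟨max M1 M2, fun p h1 h2 => huv ⟨?_, ?_⟩⟩
  · exact hM1 _ fun k hk => h1 k (lt_of_lt_of_le hk (le_max_left _ _))
  · exact hM2 _ fun k hk => h2 k (lt_of_lt_of_le hk (le_max_right _ _))

end cylinders

section residualsec

lemma dense_appendSeq_preimage (u : List Bool) {D : Set Cantor} (hD : Dense D) :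
    Dense {γ : Cantor | appendSeq u γ ∈ D} := by
  rw [dense_iff_inter_open]
  rintro V hV ⟨γ₀, hγ₀⟩
  obtain ⟨M, hM⟩ := exists_cylinder_subset hV hγ₀
  obtain ⟨β, hβcyl, hβD⟩ := hD.inter_open_nonempty _
    (isOpen_cylinder (appendSeq u γ₀) (u.length + M)) ⟨appendSeq u γ₀, fun _ _ => rfl⟩
  refine ⟨fun k => β (k + u.length), ⟨hM _ ?_, ?_⟩⟩
  · intro k hk
    have h1 : β (k + u.length) = appendSeq u γ₀ (k + u.length) := hβcyl _ (by omega)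
    rw [h1, appendSeq_ge _ _ (by omega)]
    congr 1
    omega
  · show appendSeq u (fun k => β (k + u.length)) ∈ D
    have h2 : appendSeq u (fun k => β (k + u.length)) = β := by
      funext k
      rcases lt_or_ge k u.length with h | h
      · rw [appendSeq_lt _ _ h, hβcyl k (by omega), appendSeq_lt _ _ h]
      · rw [appendSeq_ge _ _ h]
        congr 1
        omega
    rwa [h2]

lemma residual_appendSeq_preimage (u : List Bool) {G : Set Cantor}
    (hG : G ∈ residual Cantor) : {γ : Cantor | appendSeq u γ ∈ G} ∈ residual Cantor := by
  obtain ⟨T, hTo, hTd, hTc, hTsub⟩ := mem_residual_iff.mp hG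
  refine mem_residual_iff.mpr ⟨(fun D => {γ : Cantor | appendSeq u γ ∈ D}) '' T, ?_, ?_,
    hTc.image _, ?_⟩
  · rintro t ⟨D, hD, rfl⟩
    exact (hTo D hD).preimage (continuous_appendSeq u)
  · rintro t ⟨D, hD, rfl⟩
    exact dense_appendSeq_preimage u (hTd D hD)
  · intro γ hγ
    exact hTsub (Set.mem_sInter.mpr fun D hD => hγ _ ⟨D, hD, rfl⟩)

end residualsec

section tseq

lemma tSeq_nil (φ : List ℕ → Option Ordinal.{0}) (ε : Bool) : tSeq φ ε [] = [] := rfl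

lemma tSeq_snoc (φ : List ℕ → Option Ordinal.{0}) (ε : Bool) (s : List ℕ) (n : ℕ) :
    tSeq φ ε (s ++ [n]) = tSeq φ ε s ++ (psiFun n ++
      (List.replicate (cEnum φ (s ++ [n]) - cEnum φ s - (psiFun n).length - 1) false ++ [ε])) := by
  unfold tSeq
  rw [List.reverse_append]
  show tAux φ ε (n :: s.reverse) = _
  rw [tAux, List.reverse_reverse]
  simp [List.append_assoc]

lemma tSeq_prefix_snoc (φ : List ℕ → Option Ordinal.{0}) (ε : Bool) (s : List ℕ) (n : ℕ) :
    tSeq φ ε s <+: tSeq φ ε (s ++ [n]) :=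
  ⟨_, (tSeq_snoc φ ε s n).symm⟩

lemma psiFun_prefix_tSeq (φ : List ℕ → Option Ordinal.{0}) (ε : Bool) :
    ∀ s : List ℕ, s ≠ [] → psiFun (s.headD 0) <+: tSeq φ ε s := by
  intro s
  induction s using List.reverseRecOn with
  | nil => simp
  | append_singleton t m ih =>
    intro _
    rcases eq_or_ne t [] with rfl | hne
    · rw [tSeq_snoc]
      simp only [List.nil_append, tSeq_nil, List.headD_cons]
      exact List.prefix_append _ _
    · have hh : (t ++ [m]).headD 0 = t.headD 0 := by
        cases t with
        | nil => simp_all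
        | cons a l => simp
      rw [hh]
      exact (ih hne).trans (tSeq_prefix_snoc φ ε t m)

end tseq

section diffset

lemma diffSet_mem_iff {Z : Type} {η θ : Ordinal.{0}} {O : Ordinal.{0} → Set Z} {y : Z}
    (hθη : θ < η) (hy : y ∈ O θ) (hmin : ∀ θ', θ' < θ → y ∉ O θ') :
    y ∈ DiffSet η O ↔ (OrdEven θ ↔ ¬ OrdEven η) := by
  constructor
  · rintro ⟨θ₁, h1, h2, h3, h4⟩
    rcases lt_trichotomy θ₁ θ with h | rfl | h
    · exact absurd h3 (hmin θ₁ h)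
    · exact h2
    · exact absurd hy (h4 θ h)
  · intro h
    exact ⟨θ, hθη, h, hy, hmin⟩

end diffset

section eps

/-- the "side" of a node `s`. -/
def epsOf (s : List ℕ) : Bool := ! (decide ((¬ Even s.length) ↔ Even (s.headD 0)))

lemma epsOf_eq_false_iff (s : List ℕ) :
    epsOf s = false ↔ ((¬ Even s.length) ↔ Even (s.headD 0)) := by
  unfold epsOf
  rw [Bool.not_eq_false', decide_eq_true_eq]

lemma epsOf_eq_true_iff (s : List ℕ) :
    epsOf s = true ↔ ¬ ((¬ Even s.length) ↔ Even (s.headD 0)) := by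
  unfold epsOf
  rw [Bool.not_eq_true', decide_eq_false_iff_not]

lemma epsOf_snoc (n₀ : ℕ) (r : List ℕ) (n : ℕ) :
    epsOf ((n₀ :: r) ++ [n]) = ! epsOf (n₀ :: r) := by
  have h1 : ((n₀ :: r) ++ [n]).headD 0 = n₀ := by simp
  have h2 : ((n₀ :: r) ++ [n]).length = (n₀ :: r).length + 1 := by simp
  have key : ((¬ Even (((n₀ :: r) ++ [n]).length)) ↔ Even n₀)
      ↔ ¬ ((¬ Even (n₀ :: r).length) ↔ Even n₀) := by
    rw [h2, Nat.even_add_one]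
    tauto
  simp only [epsOf, h1, List.headD_cons]
  rw [decide_eq_decide.mpr key, decide_not, Bool.not_not]
  simp

end eps

section borelaux

lemma clopenable_baireMeasurable {V : Set Cantor} (h : PolishSpace.IsClopenable V) :
    BaireMeasurableSet V := by
  borelize Cantor
  haveI : PolishSpace Cantor := {}
  exact (MeasureTheory.isClopenable_iff_measurableSet.mp h).baireMeasurableSet

lemma finerOpen_baireMeasurable (σ : TopologicalSpace Cantor) (hpol : @PolishSpace Cantor σ)
    (hle : σ ≤ (Pi.topologicalSpace : TopologicalSpace Cantor)) (V : Set Cantor)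
    (hV : @IsOpen Cantor σ V) :
    @BaireMeasurableSet Cantor Pi.topologicalSpace V := by
  have h1 : @PolishSpace.IsClopenable Cantor σ V := @IsOpen.isClopenable Cantor σ hpol V hV
  obtain ⟨t', ht'le, ht'pol, ht'cl, ht'op⟩ := h1
  have h2 : @PolishSpace.IsClopenable Cantor Pi.topologicalSpace V :=
    ⟨t', ht'le.trans hle, ht'pol, ht'cl, ht'op⟩
  exact clopenable_baireMeasurable h2

end borelaux

section moreAux

lemma psiFun_even (m : ℕ) : psiFun (2 * m) = lexEnum m := by
  unfold psiFun
  congr 1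
  omega

lemma psiFun_cond (m : ℕ) (b : Bool) : psiFun (2 * m + cond b 1 0) = lexEnum m := by
  unfold psiFun
  congr 1
  cases b <;> simp <;> omega

lemma epsOf_cond (m : ℕ) (b : Bool) : epsOf [2 * m + cond b 1 0] = b := by
  cases b
  · show epsOf [2 * m + 0] = false
    rw [epsOf_eq_false_iff]
    have h1 : ¬ Even ([2 * m + 0] : List ℕ).length := by simp [Nat.even_iff]
    have h2 : Even (([2 * m + 0] : List ℕ).headD 0) := ⟨m, by show 2 * m + 0 = m + m; omega⟩
    exact iff_of_true h1 h2
  · show epsOf [2 * m + 1] = true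
    rw [epsOf_eq_true_iff]
    intro h
    have h1 : ¬ Even (([2 * m + 1] : List ℕ).headD 0) := by
      show ¬ Even (2 * m + 1)
      rw [Nat.even_iff]
      omega
    have h2 : ¬ Even ([2 * m + 1] : List ℕ).length := by simp [Nat.even_iff]
    tauto

/-- the pair map `γ ↦ (t⁰ₛ⌢γ, t¹ₛ⌢γ)`. -/
noncomputable def pairF (φ : List ℕ → Option Ordinal.{0}) (s : List ℕ) (γ : Cantor) :
    Cantor × Cantor :=
  (appendSeq (tSeq φ false s) γ, appendSeq (tSeq φ true s) γ)

lemma mem_SSset_pairF (φ : List ℕ → Option Ordinal.{0}) (s : List ℕ) (γ : Cantor)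
    (hne : s ≠ []) (hφs : φ s ≠ none) : pairF φ s γ ∈ SSset φ (epsOf s) := by
  refine ⟨s, γ, hφs, hne, ?_, rfl, rfl⟩
  by_cases h : (¬ Even s.length) ↔ Even (s.headD 0)
  · rw [(epsOf_eq_false_iff s).mpr h]
    simpa using h
  · have he : epsOf s = true := (epsOf_eq_true_iff s).mpr h
    rw [he]
    simp only [Bool.true_eq_false, iff_false]
    tauto

/-- goodness of a head: the cylinder given by `ψ(n₀)` is inside `C`. -/
def CylGood (C : Set Cantor) (n₀ : ℕ) : Prop :=
  ∀ α : Cantor, (∀ k, k < (psiFun n₀).length → α k = (psiFun n₀).getD k false) → α ∈ C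

lemma appendSeq_tSeq_mem_C {C : Set Cantor} {n₀ : ℕ} (hcg : CylGood C n₀)
    (φ : List ℕ → Option Ordinal.{0}) (ε : Bool) (s : List ℕ) (hne : s ≠ [])
    (hh : s.headD 0 = n₀) (γ : Cantor) : appendSeq (tSeq φ ε s) γ ∈ C := by
  apply hcg
  intro k hk
  have hpre := psiFun_prefix_tSeq φ ε s hne
  rw [hh] at hpre
  have hk2 : k < (tSeq φ ε s).length := lt_of_lt_of_le hk hpre.length_le
  rw [appendSeq_lt _ _ hk2]
  exact isPrefix_getD hpre hk

end moreAux

section coresec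

set_option maxHeartbeats 2000000 in
lemma core (η : Ordinal.{0}) (hη : 1 ≤ η) (φ : List ℕ → Option Ordinal.{0}) (hφ : PhiSpec η φ)
    (C : Set Cantor) (hCne : C.Nonempty) (hCop : IsOpen C)
    (S : Set (Cantor × Cantor))
    (hAS : SSset φ false ∩ C ×ˢ C ⊆ S) (hSB : Disjoint S (SSset φ true ∩ C ×ˢ C))
    (fam : Bool → Ordinal.{0} → Set (Cantor × Cantor))
    (hDT : S = DiffSet η (fam true)) (hDF : Sᶜ = DiffSet η (fam false))
    (G : Set Cantor) (hG : G ∈ residual Cantor)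
    (OO : Bool → Ordinal.{0} → Set (Cantor × Cantor))
    (hOOopen : ∀ b θ, IsOpen (OO b θ))
    (hOOloc : ∀ b θ, θ < η → ∀ p : Cantor × Cantor, p.1 ∈ G → p.2 ∈ G →
      (p ∈ fam b θ ↔ p ∈ OO b θ)) :
    False := by
  classical
  obtain ⟨hroot, hval, -, -, hsucc, hlimit⟩ := hφ
  -- parity of a generic witness with known least level
  have hW : ∀ (b : Bool) (θ' : Ordinal.{0}), θ' < η → ∀ (s : List ℕ) (γ : Cantor), s ≠ [] →
      φ s ≠ none → CylGood C (s.headD 0) →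
      pairF φ s γ ∈ fam b θ' → (∀ θ'', θ'' < θ' → pairF φ s γ ∉ fam b θ'') →
      ((OrdEven θ' ↔ ¬ OrdEven η) ↔ epsOf s ≠ b) := by
    intro b θ' hθη s γ hne hφs hcg hfam hmin
    have hmem := mem_SSset_pairF φ s γ hne hφs
    have hC : pairF φ s γ ∈ C ×ˢ C :=
      ⟨appendSeq_tSeq_mem_C hcg φ false s hne rfl γ, appendSeq_tSeq_mem_C hcg φ true s hne rfl γ⟩
    have hDiff := diffSet_mem_iff hθη hfam hmin
    cases hε : epsOf s with
    | false =>
      rw [hε] at hmem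
      have hyS : pairF φ s γ ∈ S := hAS ⟨hmem, hC⟩
      cases b with
      | true =>
        have hyD : pairF φ s γ ∈ DiffSet η (fam true) := by rw [← hDT]; exact hyS
        exact iff_of_true (hDiff.mp hyD) (by decide)
      | false =>
        refine iff_of_false (fun hP => ?_) (by decide)
        have h2 : pairF φ s γ ∈ Sᶜ := by rw [hDF]; exact hDiff.mpr hP
        exact h2 hyS
    | true =>
      rw [hε] at hmem
      have hyS : pairF φ s γ ∉ S := fun hS => Set.disjoint_left.mp hSB hS ⟨hmem, hC⟩
      cases b with
      | true =>
        refine iff_of_false (fun hP => hyS ?_) (by decide)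
        rw [hDT]
        exact hDiff.mpr hP
      | false =>
        have hyD : pairF φ s γ ∈ DiffSet η (fam false) := by rw [← hDF]; exact hyS
        exact iff_of_true (hDiff.mp hyD) (by decide)
  -- genericity of the pair maps
  have hpairG : ∀ s : List ℕ,
      {γ : Cantor | appendSeq (tSeq φ false s) γ ∈ G ∧ appendSeq (tSeq φ true s) γ ∈ G}
        ∈ residual Cantor := by
    intro s
    have h1 := residual_appendSeq_preimage (tSeq φ false s) hG
    have h2 := residual_appendSeq_preimage (tSeq φ true s) hG
    filter_upwards [h1, h2] with γ hγ1 hγ2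
    exact ⟨hγ1, hγ2⟩
  -- main claim, by induction on the level
  have hclaim : ∀ θ' : Ordinal.{0}, ∀ (n₀ : ℕ) (r : List ℕ) (ρ : Ordinal.{0}),
      φ (n₀ :: r) = some ρ → CylGood C n₀ → θ' < ρ → ∀ (b : Bool) (γ : Cantor),
      pairF φ (n₀ :: r) γ ∉ OO b θ' := by
    intro θ'
    induction θ' using Ordinal.induction with
    | _ θ' IH =>
    intro n₀ r ρ hφs hcg hθρ b γ₀ hmem
    have hsne : (n₀ :: r) ≠ [] := List.cons_ne_nil _ _
    have hθη : θ' < η := lt_of_lt_of_le hθρ (hval _ ρ hφs)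
    obtain ⟨M, hM⟩ := exists_cylinder_subset_prod (hOOopen b θ') hmem
    have hwlen : ((List.range M).map γ₀).length = M := by simp
    -- choice of a child of the node
    have hchild : ∃ n₁ ρ₁, φ ((n₀ :: r) ++ [n₁]) = some ρ₁ ∧ θ' ≤ ρ₁ ∧
        ((List.range M).map γ₀) <+: psiFun n₁ := by
      rcases Ordinal.zero_or_succ_or_isSuccLimit ρ with h0 | ⟨χ, hχ⟩ | hlim
      · exact absurd hθρ (by rw [h0]; exact not_lt_zero' (a := θ'))
      · obtain ⟨m, -, hmw⟩ := lexEnum_extend ((List.range M).map γ₀) 0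
        refine ⟨2 * m, χ, hsucc _ χ (2 * m) (by rw [hφs, ← hχ, Ordinal.add_one_eq_succ]), ?_, ?_⟩
        · rw [← hχ] at hθρ
          exact Order.lt_succ_iff.mp hθρ
        · rwa [psiFun_even]
      · obtain ⟨θf, hθf, hmono, -, hcof⟩ := hlimit _ ρ hφs hlim
        obtain ⟨nst, hnst⟩ := hcof θ' hθρ
        obtain ⟨m, hm, hmw⟩ := lexEnum_extend ((List.range M).map γ₀) nst
        refine ⟨2 * m, θf (2 * m), hθf (2 * m),
          le_trans hnst (hmono.monotone (by omega)), ?_⟩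
        rwa [psiFun_even]
    obtain ⟨n₁, ρ₁, hφu, hθρ₁, hwpre⟩ := hchild
    -- first witness: a generic point in the cylinder, at the node itself
    obtain ⟨γs, hγscyl, hγsG⟩ := (dense_of_mem_residual (hpairG (n₀ :: r))).inter_open_nonempty
      _ (isOpen_cylinder γ₀ M) ⟨γ₀, fun _ _ => rfl⟩
    have hxsOO : pairF φ (n₀ :: r) γs ∈ OO b θ' := by
      apply hM
      · intro k hk
        exact appendSeq_agree _ (fun j hj => hγscyl j hj) hk
      · intro k hk
        exact appendSeq_agree _ (fun j hj => hγscyl j hj) hk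
    have hxsfam : pairF φ (n₀ :: r) γs ∈ fam b θ' :=
      (hOOloc b θ' hθη _ hγsG.1 hγsG.2).mpr hxsOO
    have hxsmin : ∀ θ'', θ'' < θ' → pairF φ (n₀ :: r) γs ∉ fam b θ'' := by
      intro θ'' hθ'' hmem''
      exact IH θ'' hθ'' n₀ r ρ hφs hcg (lt_trans hθ'' hθρ) b γs
        ((hOOloc b θ'' (lt_trans hθ'' hθη) _ hγsG.1 hγsG.2).mp hmem'')
    have hPs := hW b θ' hθη (n₀ :: r) γs hsne (by rw [hφs]; simp) hcg hxsfam hxsmin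
    -- second witness: a generic point at the chosen child
    obtain ⟨γu, hγuG⟩ := (dense_of_mem_residual (hpairG ((n₀ :: r) ++ [n₁]))).nonempty
    have htail : ∀ (ε : Bool) (k : ℕ), k < M →
        appendSeq (tSeq φ ε ((n₀ :: r) ++ [n₁])) γu k = appendSeq (tSeq φ ε (n₀ :: r)) γ₀ k := by
      intro ε k hk
      rw [tSeq_snoc, appendSeq_append]
      refine appendSeq_agree _ (fun j hj => ?_) hk
      have hj1 : j < (psiFun n₁).length :=
        lt_of_lt_of_le hj (by rw [← hwlen]; exact hwpre.length_le)
      rw [appendSeq_lt _ _ (by simp only [List.length_append, List.length_replicate,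
        List.length_cons, List.length_nil]; omega)]
      rw [List.getD_append _ _ _ _ hj1, isPrefix_getD hwpre (by rw [hwlen]; exact hj)]
      exact listInit_getD γ₀ M j hj
    have hxuOO : pairF φ ((n₀ :: r) ++ [n₁]) γu ∈ OO b θ' :=
      hM _ (fun k hk => htail false k hk) (fun k hk => htail true k hk)
    have hxufam : pairF φ ((n₀ :: r) ++ [n₁]) γu ∈ fam b θ' :=
      (hOOloc b θ' hθη _ hγuG.1 hγuG.2).mpr hxuOO
    have hxumin : ∀ θ'', θ'' < θ' → pairF φ ((n₀ :: r) ++ [n₁]) γu ∉ fam b θ'' := by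
      intro θ'' hθ'' hmem''
      exact IH θ'' hθ'' n₀ (r ++ [n₁]) ρ₁ hφu hcg (lt_of_lt_of_le hθ'' hθρ₁) b γu
        ((hOOloc b θ'' (lt_trans hθ'' hθη) _ hγuG.1 hγuG.2).mp hmem'')
    have hPu := hW b θ' hθη ((n₀ :: r) ++ [n₁]) γu (by simp) (by rw [hφu]; simp)
      (by simpa using hcg) hxufam hxumin
    rw [epsOf_snoc] at hPu
    have hcomb : (epsOf (n₀ :: r) ≠ b) ↔ ((! (epsOf (n₀ :: r))) ≠ b) := hPs.symm.trans hPu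
    cases hε : epsOf (n₀ :: r) <;> rw [hε] at hcomb <;> cases b <;>
      exact absurd hcomb (by decide)
  -- the root argument
  obtain ⟨γst, hγstC, hγstG⟩ := (dense_of_mem_residual hG).inter_open_nonempty C hCop hCne
  have hbD : ∃ b : Bool, (γst, γst) ∈ DiffSet η (fam b) := by
    by_cases hS : (γst, γst) ∈ S
    · refine ⟨true, ?_⟩
      rw [← hDT]
      exact hS
    · refine ⟨false, ?_⟩
      rw [← hDF]
      exact hS
  obtain ⟨b, hbD⟩ := hbD
  obtain ⟨θs, hθsη, hpar, hxO, hxmin⟩ := hbD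
  have hxOO : (γst, γst) ∈ OO b θs := (hOOloc b θs hθsη _ hγstG hγstG).mp hxO
  obtain ⟨M₁, hM₁⟩ := exists_cylinder_subset_prod (hOOopen b θs) hxOO
  obtain ⟨M₂, hM₂⟩ := exists_cylinder_subset hCop hγstC
  have hwlen : ((List.range (max M₁ M₂)).map γst).length = max M₁ M₂ := by simp
  have hchild : ∃ n₁ ρ₁, φ [n₁] = some ρ₁ ∧ θs ≤ ρ₁ ∧
      ((List.range (max M₁ M₂)).map γst) <+: psiFun n₁ ∧ epsOf [n₁] = b := by
    rcases Ordinal.zero_or_succ_or_isSuccLimit η with h0 | ⟨χ, hχ⟩ | hlim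
    · rw [h0, nonpos_iff_eq_zero] at hη
      exact absurd hη one_ne_zero
    · obtain ⟨m, -, hmw⟩ := lexEnum_extend ((List.range (max M₁ M₂)).map γst) 0
      refine ⟨2 * m + cond b 1 0, χ,
        hsucc [] χ _ (by rw [hroot, ← hχ, Ordinal.add_one_eq_succ]), ?_, ?_, epsOf_cond m b⟩
      · rw [← hχ] at hθsη
        exact Order.lt_succ_iff.mp hθsη
      · rwa [psiFun_cond]
    · obtain ⟨θf, hθf, hmono, -, hcof⟩ := hlimit [] η hroot hlim
      obtain ⟨nst, hnst⟩ := hcof θs hθsη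
      obtain ⟨m, hm, hmw⟩ := lexEnum_extend ((List.range (max M₁ M₂)).map γst) nst
      refine ⟨2 * m + cond b 1 0, θf (2 * m + cond b 1 0), hθf _,
        le_trans hnst (hmono.monotone (by cases b <;> simp <;> omega)), ?_, epsOf_cond m b⟩
      rwa [psiFun_cond]
  obtain ⟨n₁, ρ₁, hφu, hθρ₁, hwpre, hεn⟩ := hchild
  have hcg : CylGood C n₁ := by
    intro α hα
    apply hM₂
    intro k hk
    have hk1 : k < max M₁ M₂ := lt_of_lt_of_le hk (le_max_right M₁ M₂)
    have hk2 : k < (psiFun n₁).length := lt_of_lt_of_le hk1 (by rw [← hwlen]; exact hwpre.length_le)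
    rw [hα k hk2, isPrefix_getD hwpre (by rw [hwlen]; exact hk1)]
    exact listInit_getD γst (max M₁ M₂) k hk1
  obtain ⟨γu, hγuG⟩ := (dense_of_mem_residual (hpairG [n₁])).nonempty
  have htail : ∀ (ε : Bool) (k : ℕ), k < M₁ → appendSeq (tSeq φ ε [n₁]) γu k = γst k := by
    intro ε k hk
    have hk1 : k < max M₁ M₂ := lt_of_lt_of_le hk (le_max_left M₁ M₂)
    have hk2 : k < (psiFun n₁).length := lt_of_lt_of_le hk1 (by rw [← hwlen]; exact hwpre.length_le)
    rw [show ([n₁] : List ℕ) = [] ++ [n₁] from rfl, tSeq_snoc, tSeq_nil, List.nil_append]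
    rw [appendSeq_lt _ _ (by simp only [List.length_append, List.length_replicate,
      List.length_cons, List.length_nil]; omega)]
    rw [List.getD_append _ _ _ _ hk2, isPrefix_getD hwpre (by rw [hwlen]; exact hk1)]
    exact listInit_getD γst (max M₁ M₂) k hk1
  have hxuOO : pairF φ [n₁] γu ∈ OO b θs :=
    hM₁ _ (fun k hk => htail false k hk) (fun k hk => htail true k hk)
  have hxufam : pairF φ [n₁] γu ∈ fam b θs :=
    (hOOloc b θs hθsη _ hγuG.1 hγuG.2).mpr hxuOO
  have hxumin : ∀ θ'', θ'' < θs → pairF φ [n₁] γu ∉ fam b θ'' := by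
    intro θ'' hθ'' hmem''
    exact hclaim θ'' n₁ [] ρ₁ hφu hcg (lt_of_lt_of_le hθ'' hθρ₁) b γu
      ((hOOloc b θ'' (lt_trans hθ'' hθsη) _ hγuG.1 hγuG.2).mp hmem'')
  have hP := hW b θs hθsη [n₁] γu (by simp) (by rw [hφu]; simp) hcg hxufam hxumin
  rw [hεn] at hP
  exact (hP.mp hpar) rfl

end coresec

section localizationsec

lemma baireMeasurable_residualEq (V : Set Cantor) (h : BaireMeasurableSet V) :
    ∃ W : Set Cantor, IsOpen W ∧ {x : Cantor | V x = W x} ∈ residual Cantor := by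
  obtain ⟨W, hWo, hWe⟩ := h.residualEq_isOpen
  exact ⟨W, hWo, hWe⟩

lemma build_loc (bσ bτ : Set (Set Cantor)) (hbσc : bσ.Countable) (hbτc : bτ.Countable)
    (tldσ tldτ : Set Cantor → Set Cantor)
    (htldσo : ∀ V, IsOpen (tldσ V)) (htldτo : ∀ V, IsOpen (tldτ V))
    (htldσe : ∀ V ∈ bσ, {x : Cantor | V x = tldσ V x} ∈ residual Cantor)
    (htldτe : ∀ V ∈ bτ, {x : Cantor | V x = tldτ V x} ∈ residual Cantor)
    (η : Ordinal.{0}) (Fm : Bool → Ordinal.{0} → Set (Cantor × Cantor))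
    (hbasis : ∀ b θ, θ < η → ∀ p ∈ Fm b θ,
      ∃ V ∈ bσ, ∃ W ∈ bτ, p ∈ V ×ˢ W ∧ V ×ˢ W ⊆ Fm b θ) :
    ∃ G : Set Cantor, G ∈ residual Cantor ∧
      ∃ OO : Bool → Ordinal.{0} → Set (Cantor × Cantor),
        (∀ b θ, IsOpen (OO b θ)) ∧
        (∀ b θ, θ < η → ∀ p : Cantor × Cantor, p.1 ∈ G → p.2 ∈ G →
          (p ∈ Fm b θ ↔ p ∈ OO b θ)) := by
  have hGσ : (⋂ V ∈ bσ, {x : Cantor | V x = tldσ V x}) ∈ residual Cantor :=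
    (countable_bInter_mem hbσc).mpr fun V hV => htldσe V hV
  have hGτ : (⋂ V ∈ bτ, {x : Cantor | V x = tldτ V x}) ∈ residual Cantor :=
    (countable_bInter_mem hbτc).mpr fun V hV => htldτe V hV
  refine ⟨(⋂ V ∈ bσ, {x : Cantor | V x = tldσ V x}) ∩ (⋂ V ∈ bτ, {x : Cantor | V x = tldτ V x}),
    Filter.inter_mem hGσ hGτ,
    fun b θ => ⋃₀ {R | ∃ V ∈ bσ, ∃ W ∈ bτ, (V ×ˢ W ⊆ Fm b θ) ∧ R = tldσ V ×ˢ tldτ W},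
    ?_, ?_⟩
  · intro b θ
    apply isOpen_sUnion
    rintro R ⟨V, hV, W, hW, hsub, rfl⟩
    exact (htldσo V).prod (htldτo W)
  · intro b θ hθ p hp1 hp2
    have hiffσ : ∀ V ∈ bσ, (p.1 ∈ V ↔ p.1 ∈ tldσ V) := fun V hV =>
      Iff.of_eq (Set.mem_iInter₂.mp hp1.1 V hV)
    have hiffτ : ∀ W ∈ bτ, (p.2 ∈ W ↔ p.2 ∈ tldτ W) := fun W hW =>
      Iff.of_eq (Set.mem_iInter₂.mp hp2.2 W hW)
    constructor
    · intro hpF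
      obtain ⟨V, hV, W, hW, hpR, hRsub⟩ := hbasis b θ hθ p hpF
      exact Set.mem_sUnion.mpr ⟨tldσ V ×ˢ tldτ W, ⟨V, hV, W, hW, hRsub, rfl⟩,
        ⟨(hiffσ V hV).mp hpR.1, (hiffτ W hW).mp hpR.2⟩⟩
    · rintro ⟨R, ⟨V, hV, W, hW, hsub, rfl⟩, hpR⟩
      exact hsub ⟨(hiffσ V hV).mpr hpR.1, (hiffτ W hW).mpr hpR.2⟩

open Topology in
lemma localization (η : Ordinal.{0}) (σ τ : TopologicalSpace Cantor)
    (hσpol : @PolishSpace Cantor σ) (hτpol : @PolishSpace Cantor τ)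
    (hσle : σ ≤ (Pi.topologicalSpace : TopologicalSpace Cantor))
    (hτle : τ ≤ (Pi.topologicalSpace : TopologicalSpace Cantor))
    (Fm : Bool → Ordinal.{0} → Set (Cantor × Cantor))
    (hFm : ∀ b θ, θ < η → IsOpen[@instTopologicalSpaceProd Cantor Cantor σ τ] (Fm b θ)) :
    ∃ G : Set Cantor, G ∈ @residual Cantor Pi.topologicalSpace ∧
      ∃ OO : Bool → Ordinal.{0} → Set (Cantor × Cantor),
        (∀ b θ, IsOpen[@instTopologicalSpaceProd Cantor Cantor
            Pi.topologicalSpace Pi.topologicalSpace] (OO b θ)) ∧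
        (∀ b θ, θ < η → ∀ p : Cantor × Cantor, p.1 ∈ G → p.2 ∈ G →
          (p ∈ Fm b θ ↔ p ∈ OO b θ)) := by
  obtain ⟨bσ, hbσc, -, hbσ⟩ :=
    @TopologicalSpace.exists_countable_basis Cantor σ hσpol.toSecondCountableTopology
  obtain ⟨bτ, hbτc, -, hbτ⟩ :=
    @TopologicalSpace.exists_countable_basis Cantor τ hτpol.toSecondCountableTopology
  have hchσ : ∀ V : Set Cantor, ∃ W : Set Cantor,
      IsOpen[(Pi.topologicalSpace : TopologicalSpace Cantor)] W ∧
        (V ∈ bσ → {x : Cantor | V x = W x} ∈ @residual Cantor Pi.topologicalSpace) := by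
    intro V
    by_cases hV : V ∈ bσ
    · obtain ⟨W, hWo, hWe⟩ := baireMeasurable_residualEq V (finerOpen_baireMeasurable σ hσpol
        hσle V (@TopologicalSpace.IsTopologicalBasis.isOpen Cantor σ V bσ hbσ hV))
      exact ⟨W, hWo, fun _ => hWe⟩
    · exact ⟨∅, @isOpen_empty Cantor Pi.topologicalSpace, fun h => absurd h hV⟩
  have hchτ : ∀ V : Set Cantor, ∃ W : Set Cantor,
      IsOpen[(Pi.topologicalSpace : TopologicalSpace Cantor)] W ∧
        (V ∈ bτ → {x : Cantor | V x = W x} ∈ @residual Cantor Pi.topologicalSpace) := by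
    intro V
    by_cases hV : V ∈ bτ
    · obtain ⟨W, hWo, hWe⟩ := baireMeasurable_residualEq V (finerOpen_baireMeasurable τ hτpol
        hτle V (@TopologicalSpace.IsTopologicalBasis.isOpen Cantor τ V bτ hbτ hV))
      exact ⟨W, hWo, fun _ => hWe⟩
    · exact ⟨∅, @isOpen_empty Cantor Pi.topologicalSpace, fun h => absurd h hV⟩
  choose tldσ htldσo htldσe using hchσ
  choose tldτ htldτo htldτe using hchτ
  have hprodbasis := @TopologicalSpace.IsTopologicalBasis.prod Cantor Cantor σ τ bσ bτ hbσ hbτ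
  have hbasis : ∀ b θ, θ < η → ∀ p ∈ Fm b θ,
      ∃ V ∈ bσ, ∃ W ∈ bτ, p ∈ V ×ˢ W ∧ V ×ˢ W ⊆ Fm b θ := by
    intro b θ hθ p hp
    obtain ⟨R, hRmem, hpR, hRsub⟩ := @TopologicalSpace.IsTopologicalBasis.exists_subset_of_mem_open
      (Cantor × Cantor) (@instTopologicalSpaceProd Cantor Cantor σ τ) _ hprodbasis p (Fm b θ)
      hp (hFm b θ hθ)
    obtain ⟨V, hV, W, hW, rfl⟩ := hRmem
    exact ⟨V, hV, W, hW, hpR, hRsub⟩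
  exact build_loc bσ bτ hbσc hbτc tldσ tldτ htldσo htldτo htldσe htldτe η Fm hbasis

end localizationsec

/-- for `η ≥ 1` countable and a nonempty clopen `C ⊆ 2^ω`, `𝕊^η_0 ∩ C²` is not
separable from `𝕊^η_1 ∩ C²` by a `pot(Δ(D_η(Σ^0_1)))` set. -/
theorem statement13 (η : Ordinal.{0}) (hη : 1 ≤ η) (hcount : η.card ≤ Cardinal.aleph0)
    (φ : List ℕ → Option Ordinal.{0}) (hφ : PhiSpec η φ)
    (C : Set Cantor) (hne : C.Nonempty) (hcl : IsClopen C) :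
    ¬ SepPot (interClass (DClass η openClass) (dualClass (DClass η openClass)))
        (SSset φ false ∩ C ×ˢ C) (SSset φ true ∩ C ×ˢ C) := by
  rintro ⟨S, ⟨σ, τ, hσle, hτle, hσpol, hτpol, hD1, hD2⟩, hAS, hSB⟩
  obtain ⟨O, hOop, -, hSO⟩ := hD1
  obtain ⟨O', hO'op, -, hSO'⟩ := hD2
  obtain ⟨G, hG, OO, hOOopen, hOOloc⟩ := localization η σ τ hσpol hτpol hσle hτle
    (fun b θ => cond b (O θ) (O' θ))
    (by
      intro b θ hθ
      cases b
      · exact hO'op θ hθ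
      · exact hOop θ hθ)
  clear hOop hO'op hσpol hτpol hσle hτle σ τ
  exact core η hη φ hφ C hne hcl.isOpen S hAS hSB
    (fun b θ => cond b (O θ) (O' θ)) hSO hSO' G hG OO hOOopen hOOloc
end
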